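/- arXiv:1802.00317 — 2 statements merged into one kernel-verified Lean document; each statement's English description precedes it below -/
import Mathlib

section
/- Let T be a MUL-tree with more than one leaf and F1(T) = {T_l, T_r} its depth-1 forest. Let B′ be a beaded tree that weakly displays both T_l and T_r, with root r and child a of r, and let B be the beaded tree obtained from B′ by deleting the edge ra, adding a new bead (u,v) (two new nodes u, v with two parallel edges from u to v), and adding edges ru and va. Then B weakly displays T. -/
/-!
Common formal framework for MUL-trees, phylogenetic networks, beaded trees,
duplication trees, weak embeddings and related operations, following
van Iersel, Janssen, Jones, Murakami, Zeh,
"Polynomial-Time Algorithms for Phylogenetic Inference Problems involving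
duplication and reticulation".

All graphs are directed multigraphs on natural-number vertices, given by a
finite vertex set, an edge-multiplicity function and a (partial) leaf
labelling by species (also natural numbers).
-/

open scoped Classical

structure DG where
  verts : Finset ℕ
  mult : ℕ → ℕ → ℕ
  label : ℕ → Option ℕ

namespace DG

/-- An arc is a pair of endpoints together with the index of the parallel copy. -/
abbrev Arc := ℕ × ℕ × ℕ

def Adj (G : DG) (u v : ℕ) : Prop := 0 < G.mult u v

def outDeg (G : DG) (u : ℕ) : ℕ := ∑ v ∈ G.verts, G.mult u v
def inDeg (G : DG) (v : ℕ) : ℕ := ∑ u ∈ G.verts, G.mult u v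

/-- `G.Reaches u v` : `u` is an ancestor of `v` (possibly `u = v`). -/
def Reaches (G : DG) : ℕ → ℕ → Prop := Relation.ReflTransGen G.Adj
/-- `G.SReaches u v` : `u` is a strict ancestor of `v` (in an acyclic graph). -/
def SReaches (G : DG) : ℕ → ℕ → Prop := Relation.TransGen G.Adj
def Acyclic (G : DG) : Prop := ∀ v, ¬ G.SReaches v v

def IsRoot (G : DG) (v : ℕ) : Prop := v ∈ G.verts ∧ G.inDeg v = 0 ∧ G.outDeg v = 1
def IsLeafNode (G : DG) (v : ℕ) : Prop := v ∈ G.verts ∧ G.inDeg v = 1 ∧ G.outDeg v = 0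
def IsTreeNode (G : DG) (v : ℕ) : Prop := v ∈ G.verts ∧ G.inDeg v = 1 ∧ G.outDeg v = 2
def IsRetic (G : DG) (v : ℕ) : Prop := v ∈ G.verts ∧ G.inDeg v = 2 ∧ G.outDeg v = 1
def IsDupNode (G : DG) (v : ℕ) : Prop := v ∈ G.verts ∧ G.inDeg v = 1 ∧ G.outDeg v = 1

/-- The reticulation number: the number of reticulation nodes. -/
def reticNum (G : DG) : ℕ := (G.verts.filter (fun v => G.inDeg v = 2 ∧ G.outDeg v = 1)).card
/-- The duplication number: the number of duplication nodes. -/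
def dupNum (G : DG) : ℕ := (G.verts.filter (fun v => G.inDeg v = 1 ∧ G.outDeg v = 1)).card
/-- The number of beads (counted by their bottom nodes). -/
noncomputable def beadNum (G : DG) : ℕ :=
  (G.verts.filter (fun v => ∃ u ∈ G.verts, G.mult u v = 2)).card

def Supported (G : DG) : Prop := ∀ u v, G.Adj u v → u ∈ G.verts ∧ v ∈ G.verts
/-- Exactly the leaves carry labels. -/
def LabelsOnLeaves (G : DG) : Prop := ∀ v, (∃ x, G.label v = some x) ↔ G.IsLeafNode v

/-- The number of leaves (= labelled nodes). -/
def numLeaves (G : DG) : ℕ := (G.verts.filter (fun v => (G.label v).isSome)).card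

/-- A multi-labelled tree (MUL-tree) with labels contained in `X`. -/
structure IsMulTree (X : Finset ℕ) (G : DG) : Prop where
  root : ∃! r, G.IsRoot r
  nodes : ∀ v ∈ G.verts, G.IsRoot v ∨ G.IsTreeNode v ∨ G.IsLeafNode v
  acyclic : G.Acyclic
  simple : ∀ u v, G.mult u v ≤ 1
  supported : G.Supported
  labels : G.LabelsOnLeaves
  labelsSub : ∀ v x, G.label v = some x → x ∈ X

/-- A rooted binary phylogenetic network on `X` (parallel edges allowed). -/
structure IsNetwork (X : Finset ℕ) (G : DG) : Prop where
  root : ∃! r, G.IsRoot r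
  nodes : ∀ v ∈ G.verts, G.IsRoot v ∨ G.IsTreeNode v ∨ G.IsRetic v ∨ G.IsLeafNode v
  acyclic : G.Acyclic
  supported : G.Supported
  labels : G.LabelsOnLeaves
  labelsSub : ∀ v x, G.label v = some x → x ∈ X
  labelsOnto : ∀ x ∈ X, ∃! v, G.label v = some x

/-- A duplication tree on `X`. -/
structure IsDupTree (X : Finset ℕ) (G : DG) : Prop where
  root : ∃! r, G.IsRoot r
  nodes : ∀ v ∈ G.verts, G.IsRoot v ∨ G.IsTreeNode v ∨ G.IsDupNode v ∨ G.IsLeafNode v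
  acyclic : G.Acyclic
  simple : ∀ u v, G.mult u v ≤ 1
  supported : G.Supported
  labels : G.LabelsOnLeaves
  labelsSub : ∀ v x, G.label v = some x → x ∈ X
  labelsOnto : ∀ x ∈ X, ∃! v, G.label v = some x

/-- A beaded tree: a phylogenetic network in which every reticulation node is
the bottom node of a bead (a pair of parallel edges). -/
def IsBeadedTree (X : Finset ℕ) (G : DG) : Prop :=
  IsNetwork X G ∧ ∀ v ∈ G.verts, G.inDeg v = 2 → ∃ u, G.mult u v = 2

def ArcOK (G : DG) (e : Arc) : Prop := e.2.2 < G.mult e.1 e.2.1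

/-- `G.IsWalk p a b` : `p` is a (nonempty) directed path of arcs from `a` to `b`. -/
def IsWalk (G : DG) (p : List Arc) (a b : ℕ) : Prop :=
  p ≠ [] ∧ (∀ e ∈ p, G.ArcOK e) ∧
  List.Chain' (fun e f : Arc => e.2.1 = f.1) p ∧
  p.head?.map Prod.fst = some a ∧
  p.getLast?.map (fun e => e.2.1) = some b

/-- `v` is a node visited by the walk `p`. -/
def OnWalk (p : List Arc) (v : ℕ) : Prop := ∃ e ∈ p, e.1 = v ∨ e.2.1 = v

/-- A weak embedding of a MUL-tree `T` into a network `N`: nodes map to nodes,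
edges map to directed paths and the two paths out of an internal node start
with different out-edges. -/
def WeakEmbedding (T N : DG) (h : ℕ → ℕ) (hE : ℕ → ℕ → List Arc) : Prop :=
  (∀ v ∈ T.verts, h v ∈ N.verts) ∧
  (∀ v, T.IsLeafNode v → N.IsLeafNode (h v) ∧ N.label (h v) = T.label v) ∧
  (∀ u v, T.Adj u v → N.IsWalk (hE u v) (h u) (h v)) ∧
  (∀ x y y', T.Adj x y → T.Adj x y' → y ≠ y' → (hE x y).head? ≠ (hE x y').head?)

/-- `N.Displays T` : `N` weakly displays `T`. -/
def Displays (N T : DG) : Prop := ∃ h hE, WeakEmbedding T N h hE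

/-- `x` is a least common ancestor of `y` and `z`. -/
def IsLCA (G : DG) (x y z : ℕ) : Prop :=
  G.Reaches x y ∧ G.Reaches x z ∧
  ∀ w, G.SReaches x w → ¬ (G.Reaches w y ∧ G.Reaches w z)

/-- A duplication mapping from a MUL-tree `T` to a duplication tree `D`. -/
def DupMapping (T D : DG) (M : ℕ → ℕ) : Prop :=
  (∀ v, T.IsLeafNode v → D.IsLeafNode (M v) ∧ D.label (M v) = T.label v) ∧
  (∀ u v, T.Adj u v → D.SReaches (M u) (M v)) ∧
  (∀ u v v', T.Adj u v → T.Adj u v' → v ≠ v' →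
    D.IsLCA (M u) (M v) (M v') ∨ D.IsDupNode (M u))

/-- `D.ConsistentWith T` : there is a duplication mapping from `T` to `D`. -/
def ConsistentWith (D T : DG) : Prop := ∃ M, DupMapping T D M

/-- A solution to Beaded Tree on `𝒯`: a beaded tree on `X` weakly displaying
every MUL-tree of `𝒯`. -/
def Solution (X : Finset ℕ) (Ts : Set DG) (B : DG) : Prop :=
  IsBeadedTree X B ∧ ∀ T ∈ Ts, B.Displays T

/-- An optimal solution: minimum reticulation number among all solutions. -/
def OptSolution (X : Finset ℕ) (Ts : Set DG) (B : DG) : Prop :=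
  Solution X Ts B ∧ ∀ B', Solution X Ts B' → B.reticNum ≤ B'.reticNum

/-- Number of beads traversed by a walk. -/
def beadsOnWalk (G : DG) (p : List Arc) : ℕ :=
  p.countP (fun e => decide (G.mult e.1 e.2.1 = 2))

/-- Number of duplication nodes traversed by a walk (as arc sources). -/
def dupsOnWalk (G : DG) (p : List Arc) : ℕ :=
  p.countP (fun e => decide (G.inDeg e.1 = 1 ∧ G.outDeg e.1 = 1))

/-- The bead depth: the maximum number of beads on any directed path. -/
noncomputable def beadDepth (G : DG) : ℕ :=
  sSup {n | ∃ p a b, G.IsWalk p a b ∧ G.beadsOnWalk p = n}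

/-- A solution to Beaded Tree Depth of minimum bead depth. -/
def DepthOptSolution (X : Finset ℕ) (Ts : Set DG) (B : DG) : Prop :=
  Solution X Ts B ∧ ∀ B', Solution X Ts B' → B.beadDepth ≤ B'.beadDepth

/-- The child of the root is the top node of a bead. -/
def HasBeadAtRoot (G : DG) : Prop :=
  ∃ r u v, G.IsRoot r ∧ G.Adj r u ∧ G.mult u v = 2

/-- `B` is obtained from `B'` by inserting a new bead `(u,v)` between the root
`r` of `B'` and its child `a`.  Equivalently, `B'` is obtained from `B` by
deleting `u` and `v` and adding an edge from the root to the child of `v`. -/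
def AddBeadAtRoot (B' B : DG) : Prop :=
  ∃ r a u v, B'.IsRoot r ∧ B'.Adj r a ∧ u ∉ B'.verts ∧ v ∉ B'.verts ∧ u ≠ v ∧
    B.verts = insert u (insert v B'.verts) ∧
    B.label = (fun w => if w = u ∨ w = v then none else B'.label w) ∧
    B.mult = (fun s t =>
      if s = r ∧ t = a then 0
      else if s = r ∧ t = u then 1
      else if s = u ∧ t = v then 2
      else if s = v ∧ t = a then 1
      else if s = u ∨ s = v ∨ t = u ∨ t = v then 0
      else B'.mult s t)

/-- `N` is obtained by joining `N1` and `N2`: the two roots are identified into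
a single node `u`, which becomes the child of a new root `r`.  The embeddings
`f1`, `f2` realise the copies of `N1` and `N2` inside `N`. -/
def IsJoinOf (N N1 N2 : DG) : Prop :=
  ∃ (f1 f2 : ℕ → ℕ) (r u : ℕ),
    N.IsRoot r ∧ u ∈ N.verts ∧ N.mult r u = 1 ∧
    Set.InjOn f1 N1.verts ∧ Set.InjOn f2 N2.verts ∧
    (∀ v, N1.IsRoot v → f1 v = u) ∧ (∀ v, N2.IsRoot v → f2 v = u) ∧
    (∀ w, w ∈ N.verts ↔ (w = r ∨ (∃ v ∈ N1.verts, f1 v = w) ∨ (∃ v ∈ N2.verts, f2 v = w))) ∧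
    (∀ v1 ∈ N1.verts, ∀ v2 ∈ N2.verts, f1 v1 = f2 v2 → N1.IsRoot v1 ∧ N2.IsRoot v2) ∧
    (∀ v ∈ N1.verts, f1 v ≠ r) ∧ (∀ v ∈ N2.verts, f2 v ≠ r) ∧
    (∀ a ∈ N1.verts, ∀ b ∈ N1.verts, N.mult (f1 a) (f1 b) = N1.mult a b) ∧
    (∀ a ∈ N2.verts, ∀ b ∈ N2.verts, N.mult (f2 a) (f2 b) = N2.mult a b) ∧
    (∀ a b, N.Adj a b →
      (a = r ∧ b = u) ∨
      (∃ a' ∈ N1.verts, ∃ b' ∈ N1.verts, f1 a' = a ∧ f1 b' = b ∧ N1.Adj a' b') ∨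
      (∃ a' ∈ N2.verts, ∃ b' ∈ N2.verts, f2 a' = a ∧ f2 b' = b ∧ N2.Adj a' b')) ∧
    (∀ v ∈ N1.verts, N.label (f1 v) = N1.label v) ∧
    (∀ v ∈ N2.verts, N.label (f2 v) = N2.label v) ∧
    N.label r = none

/-- Delete a node and all incident edges. -/
def deleteNode (G : DG) (v : ℕ) : DG where
  verts := G.verts.erase v
  mult := fun a b => if a = v ∨ b = v then 0 else G.mult a b
  label := fun a => if a = v then none else G.label a

/-- Suppress an in-degree-1 out-degree-1 node `v` with parent `p` and child `c`. -/
def suppressNode (G : DG) (v p c : ℕ) : DG where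
  verts := G.verts.erase v
  mult := fun a b =>
    if a = v ∨ b = v then 0
    else if a = p ∧ b = c then G.mult a b + 1
    else G.mult a b
  label := fun a => if a = v then none else G.label a

/-- One step of the restriction procedure for label set `S`: delete a leaf
labelled in `S` or an unlabelled node of out-degree 0, or suppress an
unlabelled node of in-degree 1 and out-degree 1. -/
inductive RStep (S : Finset ℕ) : DG → DG → Prop
  | del (G : DG) (v : ℕ) : v ∈ G.verts →
      ((∃ x ∈ S, G.label v = some x) ∨ (G.label v = none ∧ G.outDeg v = 0)) →
      RStep S G (G.deleteNode v)
  | suppress (G : DG) (v p c : ℕ) : v ∈ G.verts → G.label v = none →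
      G.mult p v = 1 → G.inDeg v = 1 → G.mult v c = 1 → G.outDeg v = 1 →
      RStep S G (G.suppressNode v p c)

/-- `Restricts S G G'` : `G' = G ∖ S`, i.e. `G'` is obtained from `G` by
deleting all leaves labelled in `S` and exhaustively deleting unlabelled nodes
of out-degree 0 and suppressing in-degree-1 out-degree-1 nodes. -/
def Restricts (S : Finset ℕ) (G G' : DG) : Prop :=
  Relation.ReflTransGen (RStep S) G G' ∧ ∀ H, ¬ RStep S G' H

/-- `𝒯 ∖ S` for a set of MUL-trees (empty results discarded). -/
def SetRestrict (S : Finset ℕ) (Ts : Set DG) : Set DG :=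
  {T' | T'.verts.Nonempty ∧ ∃ T ∈ Ts, Restricts S T T'}

/-- The member of the depth-1 forest of `T` keeping `y` and discarding the
subtree rooted at `y'` (here `r` is the root, `x` its child, `y,y'` the
children of `x`, which is suppressed). -/
noncomputable def f1del (T : DG) (r x y y' : ℕ) : DG where
  verts := (T.verts.filter (fun v => ¬ T.Reaches y' v)).erase x
  mult := fun a b =>
    if a = r ∧ b = y then 1
    else if a = x ∨ b = x ∨ T.Reaches y' a ∨ T.Reaches y' b then 0
    else T.mult a b
  label := fun v => if v = x ∨ T.Reaches y' v then none else T.label v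

/-- `T'` is one of the two members of the depth-1 forest `F1(T)`. -/
def InF1 (T T' : DG) : Prop :=
  ∃ r x y y', T.IsRoot r ∧ T.Adj r x ∧ T.Adj x y ∧ T.Adj x y' ∧ y ≠ y' ∧
    T' = f1del T r x y y'

/-- `F1(𝒯)`. -/
def F1Set (Ts : Set DG) : Set DG := {T' | ∃ T ∈ Ts, InF1 T T'}

/-- Two species labels occur in the same member of `F1(𝒯)`. -/
def SplitRel (Ts : Set DG) (a b : ℕ) : Prop :=
  ∃ T' ∈ F1Set Ts, (∃ u, T'.label u = some a) ∧ (∃ v, T'.label v = some b)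

/-- `S` is one of the classes of the split partition of `X` for `𝒯`. -/
def SplitPart (X : Finset ℕ) (Ts : Set DG) (S : Finset ℕ) : Prop :=
  ∃ a ∈ X, S = X.filter (fun b => Relation.EqvGen (SplitRel Ts) a b)

end DG

namespace DG

section Helpers

variable {G : DG}

lemma adj_ne (hacy : G.Acyclic) {a b : ℕ} (h : G.Adj a b) : a ≠ b :=
  fun heq => hacy b (Relation.TransGen.single (heq ▸ h))

lemma mult_eq_zero_of_root (hsup : G.Supported) {v : ℕ} (h0 : G.inDeg v = 0) (w : ℕ) :
    G.mult w v = 0 := by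
  by_contra hw
  have hadj : G.Adj w v := Nat.pos_of_ne_zero hw
  exact hw (Finset.sum_eq_zero_iff.mp h0 w (hsup w v hadj).1)

lemma not_adj_root (hsup : G.Supported) {v : ℕ} (h0 : G.inDeg v = 0) (w : ℕ) :
    ¬ G.Adj w v := by
  intro hadj
  have hz := mult_eq_zero_of_root hsup h0 w
  have hpos : 0 < G.mult w v := hadj
  omega

lemma reaches_root_eq (hsup : G.Supported) {v : ℕ} (h0 : G.inDeg v = 0) {w : ℕ}
    (h : G.Reaches w v) : w = v := by
  rcases Relation.ReflTransGen.cases_tail h with heq | ⟨c, _, hc⟩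
  · exact heq.symm
  · exact absurd hc (not_adj_root hsup h0 c)

lemma sum_one {s : Finset ℕ} {f : ℕ → ℕ} (h : ∑ i ∈ s, f i = 1) {a : ℕ}
    (ha : a ∈ s) (hfa : 0 < f a) : f a = 1 ∧ ∀ b ∈ s, b ≠ a → f b = 0 := by
  have h1 : ∑ i ∈ s.erase a, f i + f a = 1 := by
    rw [Finset.sum_erase_add _ _ ha]; exact h
  have hz : ∑ i ∈ s.erase a, f i = 0 := by omega
  refine ⟨by omega, fun b hb hba =>
    Finset.sum_eq_zero_iff.mp hz b (Finset.mem_erase.mpr ⟨hba, hb⟩)⟩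

lemma sum_two {s : Finset ℕ} {f : ℕ → ℕ} (h : ∑ i ∈ s, f i = 2) {a b : ℕ}
    (ha : a ∈ s) (hb : b ∈ s) (hab : a ≠ b) (hfa : 0 < f a) (hfb : 0 < f b) :
    f a = 1 ∧ f b = 1 ∧ ∀ c ∈ s, c ≠ a → c ≠ b → f c = 0 := by
  have hb' : b ∈ s.erase a := Finset.mem_erase.mpr ⟨fun hh => hab hh.symm, hb⟩
  have h1 : ∑ i ∈ s.erase a, f i + f a = 2 := by
    rw [Finset.sum_erase_add _ _ ha]; exact h
  have h2 : ∑ i ∈ (s.erase a).erase b, f i + f b = ∑ i ∈ s.erase a, f i :=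
    Finset.sum_erase_add _ _ hb'
  have hz : ∑ i ∈ (s.erase a).erase b, f i = 0 := by omega
  refine ⟨by omega, by omega, fun c hc hca hcb =>
    Finset.sum_eq_zero_iff.mp hz c (Finset.mem_erase.mpr ⟨hcb, Finset.mem_erase.mpr ⟨hca, hc⟩⟩)⟩

lemma exists_pos_of_sum_pos {s : Finset ℕ} {f : ℕ → ℕ} (h : 0 < ∑ i ∈ s, f i) :
    ∃ i ∈ s, 0 < f i := by
  by_contra hc
  push_neg at hc
  simp only [Nat.le_zero] at hc
  rw [Finset.sum_eq_zero hc] at h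
  exact lt_irrefl 0 h

lemma outDeg_pos (hsup : G.Supported) {a b : ℕ} (h : G.Adj a b) : 0 < G.outDeg a :=
  lt_of_lt_of_le h (Finset.single_le_sum (fun i _ => Nat.zero_le _) (hsup a b h).2)

lemma reach_from_root (hacy : G.Acyclic) (hsup : G.Supported) {r0 : ℕ}
    (hdeg : ∀ v ∈ G.verts, v ≠ r0 → 0 < G.inDeg v) :
    ∀ v ∈ G.verts, G.Reaches r0 v := by
  suffices H : ∀ n v, v ∈ G.verts → (G.verts.filter (fun w => G.SReaches w v)).card ≤ n →
      G.Reaches r0 v by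
    intro v hv; exact H _ v hv le_rfl
  intro n
  induction n with
  | zero =>
    intro v hv hcard
    by_cases hvr : v = r0
    · exact hvr ▸ Relation.ReflTransGen.refl
    · have hpos : 0 < ∑ u ∈ G.verts, G.mult u v := hdeg v hv hvr
      obtain ⟨p, hp, hpv⟩ := exists_pos_of_sum_pos hpos
      have hmem : p ∈ G.verts.filter (fun w => G.SReaches w v) :=
        Finset.mem_filter.mpr ⟨hp, Relation.TransGen.single hpv⟩
      have := Finset.card_pos.mpr ⟨p, hmem⟩
      omega
  | succ n ih =>
    intro v hv hcard
    by_cases hvr : v = r0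
    · exact hvr ▸ Relation.ReflTransGen.refl
    · have hpos : 0 < ∑ u ∈ G.verts, G.mult u v := hdeg v hv hvr
      obtain ⟨p, hp, hpv⟩ := exists_pos_of_sum_pos hpos
      have hadj : G.Adj p v := hpv
      have hss : G.verts.filter (fun w => G.SReaches w p) ⊂
          G.verts.filter (fun w => G.SReaches w v) := by
        rw [Finset.ssubset_def]
        constructor
        · intro w hw
          have hw' := Finset.mem_filter.mp hw
          exact Finset.mem_filter.mpr ⟨hw'.1, hw'.2.tail hadj⟩
        · intro hsub
          have hpmem : p ∈ G.verts.filter (fun w => G.SReaches w v) :=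
            Finset.mem_filter.mpr ⟨hp, Relation.TransGen.single hadj⟩
          exact hacy p (Finset.mem_filter.mp (hsub hpmem)).2
      have hlt := Finset.card_lt_card hss
      exact (ih p hp (by omega)).tail hadj

lemma reaches_comparable (huniq : ∀ w w' c, G.Adj w c → G.Adj w' c → w = w')
    {p v : ℕ} (h : G.Reaches p v) : ∀ q, G.Reaches q v → G.Reaches p q ∨ G.Reaches q p := by
  induction h with
  | refl => intro q hq; exact Or.inr hq
  | @tail b c hpb hbc ih =>
    intro q hq
    rcases Relation.ReflTransGen.cases_tail hq with heq | ⟨d, hqd, hdc⟩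
    · exact Or.inl (heq ▸ hpb.tail hbc)
    · exact ih q (huniq d b c hdc hbc ▸ hqd)

lemma reaches_parent {a w : ℕ} (h : G.Reaches a w) (hne : w ≠ a) :
    ∃ p, G.Reaches a p ∧ G.Adj p w := by
  rcases Relation.ReflTransGen.cases_tail h with heq | ⟨c, h1, h2⟩
  · exact absurd heq hne
  · exact ⟨c, h1, h2⟩

lemma isWalk_singleton {e : Arc} (h : G.ArcOK e) : G.IsWalk [e] e.1 e.2.1 := by
  refine ⟨by simp, ?_, List.isChain_singleton e, by simp, by simp⟩
  intro f hf
  simp only [List.mem_singleton] at hf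
  exact hf ▸ h

lemma isWalk_cons {e : Arc} {p : List Arc} {t : ℕ}
    (he : G.ArcOK e) (hp : G.IsWalk p e.2.1 t) : G.IsWalk (e :: p) e.1 t := by
  obtain ⟨hne, harcs, hchain, hhead, hlast⟩ := hp
  refine ⟨by simp, ?_, ?_, by simp, ?_⟩
  · intro f hf
    rcases List.mem_cons.mp hf with rfl | hf'
    · exact he
    · exact harcs f hf'
  · unfold List.Chain'
    rw [List.isChain_cons]
    refine ⟨?_, hchain⟩
    intro f hf
    rw [Option.mem_def] at hf
    rw [hf] at hhead
    simp only [Option.map_some, Option.some.injEq] at hhead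
    exact hhead.symm
  · cases p with
    | nil => exact absurd rfl hne
    | cons g q => rw [List.getLast?_cons_cons]; exact hlast

lemma isWalk_append_arc {p : List Arc} {s w : ℕ} (hp : G.IsWalk p s w) {e : Arc}
    (he : G.ArcOK e) (hew : e.1 = w) : G.IsWalk (p ++ [e]) s e.2.1 := by
  obtain ⟨hne, harcs, hchain, hhead, hlast⟩ := hp
  refine ⟨by simp, ?_, ?_, ?_, ?_⟩
  · intro f hf
    rcases List.mem_append.mp hf with hf' | hf'
    · exact harcs f hf'
    · simp only [List.mem_singleton] at hf'
      exact hf' ▸ he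
  · unfold List.Chain'
    rw [List.isChain_append]
    refine ⟨hchain, List.isChain_singleton e, ?_⟩
    intro f hf g hg
    rw [Option.mem_def] at hf
    simp only [List.head?_cons, Option.mem_def, Option.some.injEq] at hg
    rw [hf] at hlast
    simp only [Option.map_some, Option.some.injEq] at hlast
    subst hg
    rw [hew]
    exact hlast
  · cases p with
    | nil => exact absurd rfl hne
    | cons a q => simpa using hhead
  · simp [List.getLast?_concat]

lemma isWalk_tail {e : Arc} {p : List Arc} {s t : ℕ}
    (h : G.IsWalk (e :: p) s t) (hp : p ≠ []) : e.1 = s ∧ G.IsWalk p e.2.1 t := by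
  obtain ⟨_, harcs, hchain, hhead, hlast⟩ := h
  have hes : e.1 = s := by simpa using hhead
  unfold List.Chain' at hchain
  rw [List.isChain_cons] at hchain
  refine ⟨hes, hp, fun f hf => harcs f (List.mem_cons_of_mem e hf), hchain.2, ?_, ?_⟩
  · cases p with
    | nil => exact absurd rfl hp
    | cons g q =>
      have hrel := hchain.1 g rfl
      simp only [List.head?_cons, Option.map_some, Option.some.injEq]
      exact hrel.symm
  · cases p with
    | nil => exact absurd rfl hp
    | cons g q => rw [List.getLast?_cons_cons] at hlast; exact hlast

lemma isWalk_last {p : List Arc} {s t : ℕ} (h : G.IsWalk p s t) :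
    ∃ e ∈ p, G.ArcOK e ∧ e.2.1 = t := by
  obtain ⟨hne, harcs, _, _, hlast⟩ := h
  refine ⟨p.getLast hne, List.getLast_mem hne, harcs _ (List.getLast_mem hne), ?_⟩
  rw [List.getLast?_eq_getLast hne] at hlast
  simpa using hlast

lemma walk_sources (hsup : G.Supported) {r0 : ℕ} (h0 : G.inDeg r0 = 0) :
    ∀ (p : List Arc) (s t : ℕ), G.IsWalk p s t → s ≠ r0 → ∀ e ∈ p, e.1 ≠ r0 := by
  intro p
  induction p with
  | nil => intro s t hw _ e he; simp at he
  | cons f q ih =>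
    intro s t hw hs e he
    have hfs : f.1 = s := by
      have hh := hw.2.2.2.1
      simpa using hh
    rcases List.mem_cons.mp he with rfl | heq
    · rw [hfs]; exact hs
    · have hqne : q ≠ [] := List.ne_nil_of_mem heq
      obtain ⟨_, hq⟩ := isWalk_tail hw hqne
      have hf21 : f.2.1 ≠ r0 := by
        intro hcon
        have harc := hw.2.1 f List.mem_cons_self
        have hadj : G.Adj f.1 f.2.1 := Nat.lt_of_le_of_lt (Nat.zero_le _) harc
        rw [hcon] at hadj
        exact not_adj_root hsup h0 f.1 hadj
      exact ih f.2.1 t hq hf21 e heq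

lemma f1del_mult (T : DG) (r x y y' a b : ℕ) :
    (f1del T r x y y').mult a b =
      if a = r ∧ b = y then 1
      else if a = x ∨ b = x ∨ T.Reaches y' a ∨ T.Reaches y' b then 0
      else T.mult a b := rfl

lemma f1del_label (T : DG) (r x y y' v : ℕ) :
    (f1del T r x y y').label v = if v = x ∨ T.Reaches y' v then none else T.label v := rfl

lemma f1del_verts (T : DG) (r x y y' : ℕ) :
    (f1del T r x y y').verts = (T.verts.filter (fun v => ¬ T.Reaches y' v)).erase x := rfl

lemma f1del_mult_eq {T : DG} {r x y y' w : ℕ}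
    (hyr : ¬T.Reaches y r) (hyx : ¬T.Reaches y x)
    (hdisj : ∀ z, T.Reaches y z → T.Reaches y' z → False)
    (hinx : ∀ p, T.Adj p x → p = r)
    (hw : T.Reaches y w) (c : ℕ) :
    (f1del T r x y y').mult w c = T.mult w c := by
  have hwr : w ≠ r := fun h => hyr (h ▸ hw)
  have hwx : w ≠ x := fun h => hyx (h ▸ hw)
  have hwy' : ¬ T.Reaches y' w := fun h => hdisj w hw h
  rw [f1del_mult, if_neg (fun h => hwr h.1)]
  by_cases hcx : c = x
  · rw [if_pos (Or.inr (Or.inl hcx))]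
    by_contra h
    have hadj : T.Adj w c := Nat.pos_of_ne_zero (fun h0 => h h0.symm)
    rw [hcx] at hadj
    exact hwr (hinx w hadj)
  · by_cases hcy' : T.Reaches y' c
    · rw [if_pos (Or.inr (Or.inr (Or.inr hcy')))]
      by_contra h
      have hadj : T.Adj w c := Nat.pos_of_ne_zero (fun h0 => h h0.symm)
      exact hdisj c (hw.tail hadj) hcy'
    · rw [if_neg]
      rintro (h | h | h | h)
      exacts [hwx h, hcx h, hwy' h, hcy' h]

lemma f1del_leaf {T : DG} {r x y y' w : ℕ}
    (hyr : ¬T.Reaches y r) (hyx : ¬T.Reaches y x) (hyy' : ¬T.Reaches y y')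
    (hy'r : ¬T.Reaches y' r)
    (hdisj : ∀ z, T.Reaches y z → T.Reaches y' z → False)
    (hiny : ∀ p, T.Adj p y → p = x)
    (hrx_ne : r ≠ x) (hyx_ne : y ≠ x)
    (hr_mem : r ∈ T.verts)
    (hchx : ∀ c, T.Adj x c → c = y ∨ c = y')
    (hw : T.Reaches y w) (hleaf : T.IsLeafNode w) :
    (f1del T r x y y').IsLeafNode w ∧ (f1del T r x y y').label w = T.label w := by
  have hwx : w ≠ x := fun h => hyx (h ▸ hw)
  have hwy' : ¬T.Reaches y' w := fun h => hdisj w hw h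
  have hwr : w ≠ r := fun h => hyr (h ▸ hw)
  have hw_mem' : w ∈ (f1del T r x y y').verts := by
    rw [f1del_verts]
    exact Finset.mem_erase.mpr ⟨hwx, Finset.mem_filter.mpr ⟨hleaf.1, hwy'⟩⟩
  have hr_mem' : r ∈ (f1del T r x y y').verts := by
    rw [f1del_verts]
    exact Finset.mem_erase.mpr ⟨hrx_ne, Finset.mem_filter.mpr ⟨hr_mem, hy'r⟩⟩
  have hsub : (f1del T r x y y').verts ⊆ T.verts := by
    rw [f1del_verts]
    intro t ht
    exact (Finset.mem_filter.mp (Finset.mem_erase.mp ht).2).1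
  have hmem_prop : ∀ t ∈ (f1del T r x y y').verts, t ≠ x ∧ ¬T.Reaches y' t := by
    intro t ht
    rw [f1del_verts] at ht
    exact ⟨(Finset.mem_erase.mp ht).1, (Finset.mem_filter.mp (Finset.mem_erase.mp ht).2).2⟩
  have hout0 : ∑ t ∈ T.verts, T.mult w t = 0 := hleaf.2.2
  have hout' : (f1del T r x y y').outDeg w = 0 := by
    show ∑ t ∈ (f1del T r x y y').verts, (f1del T r x y y').mult w t = 0
    apply Finset.sum_eq_zero
    intro t ht
    obtain ⟨htx, hty'⟩ := hmem_prop t ht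
    rw [f1del_mult, if_neg (fun h => hwr h.1), if_neg ?_]
    · exact Finset.sum_eq_zero_iff.mp hout0 t (hsub ht)
    · rintro (h | h | h | h)
      exacts [hwx h, htx h, hwy' h, hty' h]
  have hin' : (f1del T r x y y').inDeg w = 1 := by
    by_cases hwy : w = y
    · subst hwy
      have hcalc : ∀ t ∈ (f1del T r x w y').verts,
          (f1del T r x w y').mult t w = if t = r then 1 else 0 := by
        intro t ht
        obtain ⟨htx, hty'⟩ := hmem_prop t ht
        by_cases htr : t = r
        · subst htr
          rw [if_pos rfl, f1del_mult, if_pos ⟨rfl, rfl⟩]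
        · rw [if_neg htr, f1del_mult, if_neg (fun h => htr h.1), if_neg ?_]
          · by_contra hcon
            have hadj : T.Adj t w := Nat.pos_of_ne_zero hcon
            exact htx (hiny t hadj)
          · rintro (h | h | h | h)
            exacts [htx h, hwx h, hty' h, hwy' h]
      show ∑ t ∈ (f1del T r x w y').verts, (f1del T r x w y').mult t w = 1
      rw [Finset.sum_congr rfl hcalc, Finset.sum_ite_eq' _ r (fun _ => 1)]
      exact if_pos hr_mem'
    · have hcalc : ∀ t ∈ (f1del T r x y y').verts,
          (f1del T r x y y').mult t w = T.mult t w := by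
        intro t ht
        obtain ⟨htx, hty'⟩ := hmem_prop t ht
        rw [f1del_mult, if_neg (fun h => hwy h.2), if_neg ?_]
        rintro (h | h | h | h)
        exacts [htx h, hwx h, hty' h, hwy' h]
      have hzero : ∀ t ∈ T.verts, t ∉ (f1del T r x y y').verts → T.mult t w = 0 := by
        intro t ht htn
        by_contra hcon
        have hadj : T.Adj t w := Nat.pos_of_ne_zero hcon
        have hcases : t = x ∨ T.Reaches y' t := by
          by_contra hc2
          push_neg at hc2
          refine htn ?_
          rw [f1del_verts]
          exact Finset.mem_erase.mpr ⟨hc2.1, Finset.mem_filter.mpr ⟨ht, hc2.2⟩⟩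
        rcases hcases with rfl | hty'
        · rcases hchx w hadj with rfl | rfl
          · exact hwy rfl
          · exact hyy' hw
        · exact hdisj w hw (hty'.tail hadj)
      show ∑ t ∈ (f1del T r x y y').verts, (f1del T r x y y').mult t w = 1
      rw [Finset.sum_congr rfl hcalc, Finset.sum_subset hsub hzero]
      exact hleaf.2.1
  have hlab : (f1del T r x y y').label w = T.label w := by
    rw [f1del_label, if_neg]
    rintro (h | h)
    exacts [hwx h, hwy' h]
  exact ⟨⟨hw_mem', hin', hout'⟩, hlab⟩

end Helpers

end DG

/-- Lemma 3, if-direction construction: if a beaded tree `B'`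
weakly displays both members of the depth-1 forest of a MUL-tree `T`, then the
beaded tree obtained from `B'` by inserting a bead between its root and the
root's child weakly displays `T`. -/
theorem add_bead_displays (X XB : Finset ℕ) (T : DG)
    (hT : DG.IsMulTree X T) (hleaf : 1 < T.numLeaves)
    (r x y y' : ℕ) (hr : T.IsRoot r) (hrx : T.Adj r x)
    (hxy : T.Adj x y) (hxy' : T.Adj x y') (hne : y ≠ y')
    (B' B : DG) (hB' : DG.IsBeadedTree XB B')
    (hdl : B'.Displays (DG.f1del T r x y y'))
    (hdr : B'.Displays (DG.f1del T r x y' y))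
    (hbead : DG.AddBeadAtRoot B' B) :
    B.Displays T := by
  classical
  obtain ⟨h1, hE1, hemb1⟩ := hdl
  obtain ⟨h2, hE2, hemb2⟩ := hdr
  obtain ⟨rB, aB, bu, bv, hrootB, hadjBa, hbuV, hbvV, hbuv, hverts, hlabelB, hmultB⟩ := hbead
  -- ===== basic facts about T =====
  have hsupT := hT.supported
  have hacyT := hT.acyclic
  have hin_r : T.inDeg r = 0 := hr.2.1
  have hout_r : ∑ v ∈ T.verts, T.mult r v = 1 := hr.2.2
  have hnoadj_r : ∀ w, ¬T.Adj w r := fun w => DG.not_adj_root hsupT hin_r w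
  have hreach_r : ∀ w, T.Reaches w r → w = r := fun w h => DG.reaches_root_eq hsupT hin_r h
  have hrx_ne : r ≠ x := DG.adj_ne hacyT hrx
  have hxy_ne : x ≠ y := DG.adj_ne hacyT hxy
  have hxy'_ne : x ≠ y' := DG.adj_ne hacyT hxy'
  have hx_mem : x ∈ T.verts := (hsupT r x hrx).2
  have hy_mem : y ∈ T.verts := (hsupT x y hxy).2
  have hy'_mem : y' ∈ T.verts := (hsupT x y' hxy').2
  have hy_ne_r : y ≠ r := fun h => hnoadj_r x (h ▸ hxy)
  have hy'_ne_r : y' ≠ r := fun h => hnoadj_r x (h ▸ hxy')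
  obtain ⟨r0, hr0, hrU⟩ := hT.root
  have hroot_unique : ∀ v, T.IsRoot v → v = r := fun v hv => (hrU v hv).trans (hrU r hr).symm
  have hdeg1 : ∀ v ∈ T.verts, v ≠ r → T.inDeg v = 1 := by
    intro v hv hvr
    rcases hT.nodes v hv with hh | hh | hh
    · exact absurd (hroot_unique v hh) hvr
    · exact hh.2.1
    · exact hh.2.1
  have huniqT : ∀ w w' c, T.Adj w c → T.Adj w' c → w = w' := by
    intro w w' c hw hw'
    have hcmem : c ∈ T.verts := (hsupT w c hw).2
    have hcr : c ≠ r := fun h => hnoadj_r w (h ▸ hw)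
    have hdegc : ∑ u ∈ T.verts, T.mult u c = 1 := hdeg1 c hcmem hcr
    obtain ⟨_, hz⟩ := DG.sum_one hdegc (hsupT w c hw).1 hw
    by_contra hne'
    have hz' := hz w' (hsupT w' c hw').1 (fun h => hne' h.symm)
    have hpos : 0 < T.mult w' c := hw'
    omega
  have hchr : ∀ c, T.Adj r c → c = x := by
    intro c hc
    obtain ⟨_, hz⟩ := DG.sum_one hout_r hx_mem hrx
    by_contra hcx
    have hz' := hz c (hsupT r c hc).2 hcx
    have hpos : 0 < T.mult r c := hc
    omega
  have hinx : ∀ p, T.Adj p x → p = r := fun p hp => huniqT p r x hp hrx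
  have hiny : ∀ p, T.Adj p y → p = x := fun p hp => huniqT p x y hp hxy
  have hiny' : ∀ p, T.Adj p y' → p = x := fun p hp => huniqT p x y' hp hxy'
  have hout_x : ∑ v ∈ T.verts, T.mult x v = 2 := by
    rcases hT.nodes x hx_mem with hh | hh | hh
    · exact absurd (hroot_unique x hh) (Ne.symm hrx_ne)
    · exact hh.2.2
    · have hpos := DG.outDeg_pos hsupT hxy
      have h0 : T.outDeg x = 0 := hh.2.2
      omega
  have hchx : ∀ c, T.Adj x c → c = y ∨ c = y' := by
    intro c hc
    by_contra hcon
    push_neg at hcon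
    obtain ⟨_, _, hz⟩ := DG.sum_two hout_x hy_mem hy'_mem hne hxy hxy'
    have hz' := hz c (hsupT x c hc).2 hcon.1 hcon.2
    have hpos : 0 < T.mult x c := hc
    omega
  have hyx_r : ¬T.Reaches y x := by
    intro h
    rcases Relation.ReflTransGen.cases_tail h with heq | ⟨c, hyc, hcx⟩
    · exact hxy_ne heq
    · rw [hinx c hcx] at hyc
      exact hy_ne_r (hreach_r y hyc)
  have hy'x_r : ¬T.Reaches y' x := by
    intro h
    rcases Relation.ReflTransGen.cases_tail h with heq | ⟨c, hyc, hcx⟩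
    · exact hxy'_ne heq
    · rw [hinx c hcx] at hyc
      exact hy'_ne_r (hreach_r y' hyc)
  have hyy'_r : ¬T.Reaches y y' := by
    intro h
    rcases Relation.ReflTransGen.cases_tail h with heq | ⟨c, hyc, hcy'⟩
    · exact hne heq.symm
    · rw [hiny' c hcy'] at hyc
      exact hyx_r hyc
  have hy'y_r : ¬T.Reaches y' y := by
    intro h
    rcases Relation.ReflTransGen.cases_tail h with heq | ⟨c, hyc, hcy⟩
    · exact hne heq
    · rw [hiny c hcy] at hyc
      exact hy'x_r hyc
  have hyr_r : ¬T.Reaches y r := fun h => hy_ne_r (hreach_r y h)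
  have hy'r_r : ¬T.Reaches y' r := fun h => hy'_ne_r (hreach_r y' h)
  have hdisj : ∀ z, T.Reaches y z → T.Reaches y' z → False := by
    intro z hz hz'
    rcases DG.reaches_comparable huniqT hz y' hz' with hh | hh
    · exact hyy'_r hh
    · exact hy'y_r hh
  have hdisj' : ∀ z, T.Reaches y' z → T.Reaches y z → False := fun z a b => hdisj z b a
  have hreachT : ∀ v ∈ T.verts, T.Reaches r v :=
    DG.reach_from_root hacyT hsupT (fun v hv hvr => by rw [hdeg1 v hv hvr]; omega)
  have hT9 : ∀ w ∈ T.verts, w = r ∨ w = x ∨ T.Reaches y w ∨ T.Reaches y' w := by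
    intro w hw
    rcases Relation.ReflTransGen.cases_head (hreachT w hw) with heq | ⟨c, hc, hcw⟩
    · exact Or.inl heq.symm
    · rw [hchr c hc] at hcw
      rcases Relation.ReflTransGen.cases_head hcw with heq | ⟨d, hd, hdw⟩
      · exact Or.inr (Or.inl heq.symm)
      · rcases hchx d hd with rfl | rfl
        · exact Or.inr (Or.inr (Or.inl hdw))
        · exact Or.inr (Or.inr (Or.inr hdw))
  have hyw_ne_r : ∀ w, T.Reaches y w → w ≠ r := fun w hw h => hyr_r (h ▸ hw)
  have hyw_ne_x : ∀ w, T.Reaches y w → w ≠ x := fun w hw h => hyx_r (h ▸ hw)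
  have hy'w_ne_r : ∀ w, T.Reaches y' w → w ≠ r := fun w hw h => hy'r_r (h ▸ hw)
  have hy'w_ne_x : ∀ w, T.Reaches y' w → w ≠ x := fun w hw h => hy'x_r (h ▸ hw)
  -- ===== facts about Tl and Tr =====
  have hmultTl : ∀ w, T.Reaches y w → ∀ c, (DG.f1del T r x y y').mult w c = T.mult w c :=
    fun w hw c => DG.f1del_mult_eq hyr_r hyx_r hdisj hinx hw c
  have hmultTr : ∀ w, T.Reaches y' w → ∀ c, (DG.f1del T r x y' y).mult w c = T.mult w c :=
    fun w hw c => DG.f1del_mult_eq hy'r_r hy'x_r hdisj' hinx hw c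
  have hadjTl : ∀ w c, T.Reaches y w → T.Adj w c → (DG.f1del T r x y y').Adj w c := by
    intro w c hw h
    show 0 < (DG.f1del T r x y y').mult w c
    rw [hmultTl w hw c]
    exact h
  have hadjTr : ∀ w c, T.Reaches y' w → T.Adj w c → (DG.f1del T r x y' y).Adj w c := by
    intro w c hw h
    show 0 < (DG.f1del T r x y' y).mult w c
    rw [hmultTr w hw c]
    exact h
  have hmemTl : ∀ w, w ∈ T.verts → ¬T.Reaches y' w → w ≠ x → w ∈ (DG.f1del T r x y y').verts := by
    intro w hw h1' h2'
    rw [DG.f1del_verts]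
    exact Finset.mem_erase.mpr ⟨h2', Finset.mem_filter.mpr ⟨hw, h1'⟩⟩
  have hmemTr : ∀ w, w ∈ T.verts → ¬T.Reaches y w → w ≠ x → w ∈ (DG.f1del T r x y' y).verts := by
    intro w hw h1' h2'
    rw [DG.f1del_verts]
    exact Finset.mem_erase.mpr ⟨h2', Finset.mem_filter.mpr ⟨hw, h1'⟩⟩
  have hy_in_Tl : y ∈ (DG.f1del T r x y y').verts :=
    hmemTl y hy_mem hy'y_r (Ne.symm hxy_ne)
  have hy'_in_Tr : y' ∈ (DG.f1del T r x y' y).verts :=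
    hmemTr y' hy'_mem hyy'_r (Ne.symm hxy'_ne)
  have hTl_ry : (DG.f1del T r x y y').Adj r y := by
    show 0 < (DG.f1del T r x y y').mult r y
    rw [DG.f1del_mult, if_pos ⟨rfl, rfl⟩]
    omega
  have hTr_ry' : (DG.f1del T r x y' y).Adj r y' := by
    show 0 < (DG.f1del T r x y' y).mult r y'
    rw [DG.f1del_mult, if_pos ⟨rfl, rfl⟩]
    omega
  have hleafTl : ∀ w, T.Reaches y w → T.IsLeafNode w →
      (DG.f1del T r x y y').IsLeafNode w ∧ (DG.f1del T r x y y').label w = T.label w :=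
    fun w hw hl => DG.f1del_leaf hyr_r hyx_r hyy'_r hy'r_r hdisj hiny hrx_ne
      (Ne.symm hxy_ne) hr.1 hchx hw hl
  have hleafTr : ∀ w, T.Reaches y' w → T.IsLeafNode w →
      (DG.f1del T r x y' y).IsLeafNode w ∧ (DG.f1del T r x y' y).label w = T.label w :=
    fun w hw hl => DG.f1del_leaf hy'r_r hy'x_r hy'y_r hyr_r hdisj' hiny' hrx_ne
      (Ne.symm hxy'_ne) hr.1 (fun c hc => (hchx c hc).symm) hw hl
  -- ===== basic facts about B' and B =====
  have hNB := hB'.1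
  have hsupB := hNB.supported
  have hacyB := hNB.acyclic
  have hinB0 : B'.inDeg rB = 0 := hrootB.2.1
  have hnoadjB : ∀ w, ¬B'.Adj w rB := fun w => DG.not_adj_root hsupB hinB0 w
  have hreachB_r : ∀ w, B'.Reaches w rB → w = rB := fun w h => DG.reaches_root_eq hsupB hinB0 h
  have hrB_mem : rB ∈ B'.verts := hrootB.1
  have haB_mem : aB ∈ B'.verts := (hsupB rB aB hadjBa).2
  have haB_ne_rB : aB ≠ rB := Ne.symm (DG.adj_ne hacyB hadjBa)
  have hbu_ne_rB : bu ≠ rB := fun h => hbuV (h ▸ hrB_mem)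
  have hbv_ne_rB : bv ≠ rB := fun h => hbvV (h ▸ hrB_mem)
  have hbu_ne_aB : bu ≠ aB := fun h => hbuV (h ▸ haB_mem)
  have hbv_ne_aB : bv ≠ aB := fun h => hbvV (h ▸ haB_mem)
  obtain ⟨rb0, hrb0, hrbU⟩ := hNB.root
  have hrootB_unique : ∀ v, B'.IsRoot v → v = rB := fun v hv => (hrbU v hv).trans (hrbU rB hrootB).symm
  have hdegB : ∀ z ∈ B'.verts, z ≠ rB → 0 < B'.inDeg z := by
    intro z hz hzr
    rcases hNB.nodes z hz with hh | hh | hh | hh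
    · exact absurd (hrootB_unique z hh) hzr
    · rw [hh.2.1]; omega
    · rw [hh.2.1]; omega
    · rw [hh.2.1]; omega
  have hreachB : ∀ z ∈ B'.verts, B'.Reaches rB z := DG.reach_from_root hacyB hsupB hdegB
  have houtB_r : ∑ v ∈ B'.verts, B'.mult rB v = 1 := hrootB.2.2
  obtain ⟨hmB_ra, hmB_rz⟩ := DG.sum_one houtB_r haB_mem hadjBa
  have hchB : ∀ t, B'.Adj rB t → t = aB := by
    intro t ht
    by_contra hcon
    have hz := hmB_rz t (hsupB rB t ht).2 hcon
    have hpos : 0 < B'.mult rB t := ht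
    omega
  have hwalk_end : ∀ (p : List DG.Arc) (s t : ℕ), B'.IsWalk p s t → t ≠ rB := by
    intro p s t hw hcon
    obtain ⟨e, hep, heok, het⟩ := DG.isWalk_last hw
    have hadj : B'.Adj e.1 e.2.1 := Nat.lt_of_le_of_lt (Nat.zero_le _) heok
    rw [het, hcon] at hadj
    exact hnoadjB e.1 hadj
  have hmultB' : ∀ s t, B.mult s t =
      if s = rB ∧ t = aB then 0
      else if s = rB ∧ t = bu then 1
      else if s = bu ∧ t = bv then 2
      else if s = bv ∧ t = aB then 1
      else if s = bu ∨ s = bv ∨ t = bu ∨ t = bv then 0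
      else B'.mult s t := fun s t => by rw [hmultB]
  have hlabelB' : ∀ z, B.label z = if z = bu ∨ z = bv then none else B'.label z :=
    fun z => by rw [hlabelB]
  have hmultBB : ∀ s t, s ∈ B'.verts → t ∈ B'.verts → ¬(s = rB ∧ t = aB) →
      B.mult s t = B'.mult s t := by
    intro s t hs ht hcon
    have hsu : s ≠ bu := fun h => hbuV (h ▸ hs)
    have hsv : s ≠ bv := fun h => hbvV (h ▸ hs)
    have htu : t ≠ bu := fun h => hbuV (h ▸ ht)
    have htv : t ≠ bv := fun h => hbvV (h ▸ ht)
    have hlast : ¬(s = bu ∨ s = bv ∨ t = bu ∨ t = bv) := by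
      rintro (h | h | h | h)
      exacts [hsu h, hsv h, htu h, htv h]
    rw [hmultB' s t, if_neg hcon, if_neg (fun h => htu h.2), if_neg (fun h => hsu h.1),
      if_neg (fun h => hsv h.1), if_neg hlast]
  have hm_rubu : B.mult rB bu = 1 := by
    rw [hmultB' rB bu, if_neg (fun h => hbu_ne_aB h.2), if_pos ⟨rfl, rfl⟩]
  have hm_buv : B.mult bu bv = 2 := by
    rw [hmultB' bu bv, if_neg (fun h => hbu_ne_rB h.1), if_neg (fun h => hbu_ne_rB h.1),
      if_pos ⟨rfl, rfl⟩]
  have hm_bva : B.mult bv aB = 1 := by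
    rw [hmultB' bv aB, if_neg (fun h => hbv_ne_rB h.1), if_neg (fun h => hbv_ne_rB h.1),
      if_neg (fun h => hbuv h.1.symm), if_pos ⟨rfl, rfl⟩]
  have hsubBV : ∀ z ∈ B'.verts, z ∈ B.verts := by
    intro z hz
    rw [hverts]
    exact Finset.mem_insert_of_mem (Finset.mem_insert_of_mem hz)
  have hbu_in_B : bu ∈ B.verts := by rw [hverts]; exact Finset.mem_insert_self _ _
  have hbu_notin : bu ∉ insert bv B'.verts := by
    simp only [Finset.mem_insert]
    rintro (h | h)
    exacts [hbuv h, hbuV h]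
  have htrans : ∀ (p : List DG.Arc) (s t : ℕ), B'.IsWalk p s t → s ≠ rB → B.IsWalk p s t := by
    intro p s t hw hs
    have hsrc := DG.walk_sources hsupB hinB0 p s t hw hs
    obtain ⟨hne', harcs, hch, hh, hl⟩ := hw
    refine ⟨hne', ?_, hch, hh, hl⟩
    intro e he
    have harc := harcs e he
    have hadj : B'.Adj e.1 e.2.1 := Nat.lt_of_le_of_lt (Nat.zero_le _) harc
    have hmm := hmultBB e.1 e.2.1 (hsupB _ _ hadj).1 (hsupB _ _ hadj).2 (fun h => hsrc e he h.1)
    show e.2.2 < B.mult e.1 e.2.1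
    rw [hmm]
    exact harc
  have hwalk_bv : ∀ t, B'.Reaches aB t → ∃ Q, B.IsWalk Q bv t := by
    intro t ht
    induction ht with
    | refl =>
      refine ⟨[(bv, aB, 0)], DG.isWalk_singleton ?_⟩
      show 0 < B.mult bv aB
      rw [hm_bva]
      omega
    | @tail b c hab hbc ih =>
      obtain ⟨Q, hQ⟩ := ih
      have hbne : b ≠ rB := fun h => haB_ne_rB (hreachB_r aB (h ▸ hab))
      have harc : B.ArcOK (b, c, 0) := by
        show 0 < B.mult b c
        rw [hmultBB b c (hsupB _ _ hbc).1 (hsupB _ _ hbc).2 (fun h => hbne h.1)]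
        exact hbc
      exact ⟨Q ++ [(b, c, 0)], DG.isWalk_append_arc hQ harc rfl⟩
  have hne_rB1 : ∀ w, T.Reaches y w → h1 w ≠ rB := by
    intro w hw
    by_cases hwy : w = y
    · subst hwy
      exact hwalk_end _ _ _ (hemb1.2.2.1 r w hTl_ry)
    · obtain ⟨p, hp, hpw⟩ := DG.reaches_parent hw hwy
      exact hwalk_end _ _ _ (hemb1.2.2.1 p w (hadjTl p w hp hpw))
  have hne_rB2 : ∀ w, T.Reaches y' w → h2 w ≠ rB := by
    intro w hw
    by_cases hwy : w = y'
    · subst hwy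
      exact hwalk_end _ _ _ (hemb2.2.2.1 r w hTr_ry')
    · obtain ⟨p, hp, hpw⟩ := DG.reaches_parent hw hwy
      exact hwalk_end _ _ _ (hemb2.2.2.1 p w (hadjTr p w hp hpw))
  have hreach_aB1 : B'.Reaches aB (h1 y) := by
    have hm : h1 y ∈ B'.verts := hemb1.1 y hy_in_Tl
    rcases Relation.ReflTransGen.cases_head (hreachB (h1 y) hm) with heq | ⟨c, hc, hcw⟩
    · exact absurd heq.symm (hne_rB1 y Relation.ReflTransGen.refl)
    · rwa [hchB c hc] at hcw
  have hreach_aB2 : B'.Reaches aB (h2 y') := by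
    have hm : h2 y' ∈ B'.verts := hemb2.1 y' hy'_in_Tr
    rcases Relation.ReflTransGen.cases_head (hreachB (h2 y') hm) with heq | ⟨c, hc, hcw⟩
    · exact absurd heq.symm (hne_rB2 y' Relation.ReflTransGen.refl)
    · rwa [hchB c hc] at hcw
  obtain ⟨Qy, hQy⟩ := hwalk_bv (h1 y) hreach_aB1
  obtain ⟨Qy', hQy'⟩ := hwalk_bv (h2 y') hreach_aB2
  -- degree and label transfer from B' to B
  have hlabel_eq : ∀ z ∈ B'.verts, B.label z = B'.label z := by
    intro z hz
    rw [hlabelB' z, if_neg]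
    rintro (h | h)
    exacts [hbuV (h ▸ hz), hbvV (h ▸ hz)]
  have hin_eq : ∀ z ∈ B'.verts, B.inDeg z = B'.inDeg z := by
    intro z hz
    have hzu : z ≠ bu := fun h => hbuV (h ▸ hz)
    have hzv : z ≠ bv := fun h => hbvV (h ▸ hz)
    have e1 : B.inDeg z = B.mult bu z + (B.mult bv z + ∑ t ∈ B'.verts, B.mult t z) := by
      show ∑ t ∈ B.verts, B.mult t z = _
      rw [hverts, Finset.sum_insert hbu_notin, Finset.sum_insert hbvV]
    have h1' : B.mult bu z = 0 := by
      rw [hmultB' bu z, if_neg (fun h => hbu_ne_rB h.1), if_neg (fun h => hbu_ne_rB h.1),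
        if_neg (fun h => hzv h.2), if_neg (fun h => hbuv h.1), if_pos (Or.inl rfl)]
    have h9 : B'.inDeg z = ∑ t ∈ B'.verts, B'.mult t z := rfl
    by_cases hza : z = aB
    · subst hza
      have h5 : ∑ t ∈ B'.verts.erase rB, B.mult t z = ∑ t ∈ B'.verts.erase rB, B'.mult t z := by
        apply Finset.sum_congr rfl
        intro t ht
        have ht' := Finset.mem_erase.mp ht
        exact hmultBB t z ht'.2 hz (fun h => ht'.1 h.1)
      have h6 : B.mult rB z = 0 := by
        rw [hmultB' rB z, if_pos ⟨rfl, rfl⟩]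
      have h7 : ∑ t ∈ B'.verts.erase rB, B.mult t z + B.mult rB z = ∑ t ∈ B'.verts, B.mult t z :=
        Finset.sum_erase_add _ _ hrB_mem
      have h8 : ∑ t ∈ B'.verts.erase rB, B'.mult t z + B'.mult rB z = ∑ t ∈ B'.verts, B'.mult t z :=
        Finset.sum_erase_add _ _ hrB_mem
      have h2' : B.mult bv z = 1 := hm_bva
      rw [e1, h9]
      omega
    · have h2' : B.mult bv z = 0 := by
        rw [hmultB' bv z, if_neg (fun h => hbv_ne_rB h.1), if_neg (fun h => hbv_ne_rB h.1),
          if_neg (fun h => hbuv h.1.symm), if_neg (fun h => hza h.2),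
          if_pos (Or.inr (Or.inl rfl))]
      have h5 : ∑ t ∈ B'.verts, B.mult t z = ∑ t ∈ B'.verts, B'.mult t z :=
        Finset.sum_congr rfl (fun t ht => hmultBB t z ht hz (fun h => hza h.2))
      rw [e1, h9]
      omega
  have hout_eq : ∀ z ∈ B'.verts, B.outDeg z = B'.outDeg z := by
    intro z hz
    have hzu : z ≠ bu := fun h => hbuV (h ▸ hz)
    have hzv : z ≠ bv := fun h => hbvV (h ▸ hz)
    have e1 : B.outDeg z = B.mult z bu + (B.mult z bv + ∑ t ∈ B'.verts, B.mult z t) := by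
      show ∑ t ∈ B.verts, B.mult z t = _
      rw [hverts, Finset.sum_insert hbu_notin, Finset.sum_insert hbvV]
    have h2' : B.mult z bv = 0 := by
      rw [hmultB' z bv, if_neg (fun h => hbv_ne_aB h.2), if_neg (fun h => hbuv h.2.symm),
        if_neg (fun h => hzu h.1), if_neg (fun h => hzv h.1),
        if_pos (Or.inr (Or.inr (Or.inr rfl)))]
    have h9 : B'.outDeg z = ∑ t ∈ B'.verts, B'.mult z t := rfl
    by_cases hzr : z = rB
    · subst hzr
      have h1' : B.mult z bu = 1 := hm_rubu
      have h5 : ∑ t ∈ B'.verts.erase aB, B.mult z t = ∑ t ∈ B'.verts.erase aB, B'.mult z t := by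
        apply Finset.sum_congr rfl
        intro t ht
        have ht' := Finset.mem_erase.mp ht
        exact hmultBB z t hz ht'.2 (fun h => ht'.1 h.2)
      have h6 : B.mult z aB = 0 := by
        rw [hmultB' z aB, if_pos ⟨rfl, rfl⟩]
      have h7 : ∑ t ∈ B'.verts.erase aB, B.mult z t + B.mult z aB = ∑ t ∈ B'.verts, B.mult z t :=
        Finset.sum_erase_add _ _ haB_mem
      have h8 : ∑ t ∈ B'.verts.erase aB, B'.mult z t + B'.mult z aB = ∑ t ∈ B'.verts, B'.mult z t :=
        Finset.sum_erase_add _ _ haB_mem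
      rw [e1, h9]
      omega
    · have h1' : B.mult z bu = 0 := by
        rw [hmultB' z bu, if_neg (fun h => hzr h.1), if_neg (fun h => hzr h.1),
          if_neg (fun h => hzu h.1), if_neg (fun h => hzv h.1),
          if_pos (Or.inr (Or.inr (Or.inl rfl)))]
      have h5 : ∑ t ∈ B'.verts, B.mult z t = ∑ t ∈ B'.verts, B'.mult z t :=
        Finset.sum_congr rfl (fun t ht => hmultBB z t hz ht (fun h => hzr h.1))
      rw [e1, h9]
      omega
  have hleaf_transfer : ∀ z, B'.IsLeafNode z → B.IsLeafNode z := by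
    intro z hzl
    refine ⟨hsubBV z hzl.1, ?_, ?_⟩
    · rw [hin_eq z hzl.1]; exact hzl.2.1
    · rw [hout_eq z hzl.1]; exact hzl.2.2
  -- ===== the embedding =====
  obtain ⟨hfun, hfun_def⟩ : ∃ f : ℕ → ℕ, f = (fun w =>
      if w = r then rB else if w = x then bu else if T.Reaches y w then h1 w else h2 w) := ⟨_, rfl⟩
  obtain ⟨hEfun, hEfun_def⟩ : ∃ f : ℕ → ℕ → List DG.Arc, f = (fun w c =>
      if w = r then [(rB, bu, 0)]
      else if w = x then (if c = y then (bu, bv, 0) :: Qy else (bu, bv, 1) :: Qy')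
      else if T.Reaches y w then hE1 w c else hE2 w c) := ⟨_, rfl⟩
  have hfun_r : hfun r = rB := by rw [hfun_def]; exact if_pos rfl
  have hfun_x : hfun x = bu := by
    rw [hfun_def]
    exact (if_neg (Ne.symm hrx_ne)).trans (if_pos rfl)
  have hfun_1 : ∀ w, T.Reaches y w → hfun w = h1 w := by
    intro w hw
    rw [hfun_def]
    exact (if_neg (hyw_ne_r w hw)).trans ((if_neg (hyw_ne_x w hw)).trans (if_pos hw))
  have hfun_2 : ∀ w, T.Reaches y' w → hfun w = h2 w := by
    intro w hw
    rw [hfun_def]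
    exact (if_neg (hy'w_ne_r w hw)).trans ((if_neg (hy'w_ne_x w hw)).trans
      (if_neg (fun hc => hdisj w hc hw)))
  have hE_r : ∀ c, hEfun r c = [(rB, bu, 0)] := by
    intro c
    rw [hEfun_def]
    exact if_pos rfl
  have hE_xy : hEfun x y = (bu, bv, 0) :: Qy := by
    rw [hEfun_def]
    exact (if_neg (Ne.symm hrx_ne)).trans ((if_pos rfl).trans (if_pos rfl))
  have hE_xy' : hEfun x y' = (bu, bv, 1) :: Qy' := by
    rw [hEfun_def]
    exact (if_neg (Ne.symm hrx_ne)).trans ((if_pos rfl).trans (if_neg (Ne.symm hne)))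
  have hE_1 : ∀ w c, T.Reaches y w → hEfun w c = hE1 w c := by
    intro w c hw
    rw [hEfun_def]
    exact (if_neg (hyw_ne_r w hw)).trans ((if_neg (hyw_ne_x w hw)).trans (if_pos hw))
  have hE_2 : ∀ w c, T.Reaches y' w → hEfun w c = hE2 w c := by
    intro w c hw
    rw [hEfun_def]
    exact (if_neg (hy'w_ne_r w hw)).trans ((if_neg (hy'w_ne_x w hw)).trans
      (if_neg (fun hc => hdisj w hc hw)))
  refine ⟨hfun, hEfun, ?_, ?_, ?_, ?_⟩
  · -- vertices
    intro w hw
    rcases hT9 w hw with rfl | rfl | hh | hh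
    · rw [hfun_r]; exact hsubBV rB hrB_mem
    · rw [hfun_x]; exact hbu_in_B
    · rw [hfun_1 w hh]
      exact hsubBV _ (hemb1.1 w (hmemTl w hw (fun h => hdisj w hh h) (hyw_ne_x w hh)))
    · rw [hfun_2 w hh]
      exact hsubBV _ (hemb2.1 w (hmemTr w hw (fun h => hdisj w h hh) (hy'w_ne_x w hh)))
  · -- leaves
    intro w hwl
    have hw_mem := hwl.1
    have hwr : w ≠ r := by
      intro h
      have hh := hwl.2.1
      rw [h, hin_r] at hh
      omega
    have hwx : w ≠ x := by
      intro h
      have hh : ∑ v ∈ T.verts, T.mult w v = 0 := hwl.2.2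
      rw [h, hout_x] at hh
      omega
    rcases hT9 w hw_mem with rfl | rfl | hh | hh
    · exact absurd rfl hwr
    · exact absurd rfl hwx
    · rw [hfun_1 w hh]
      obtain ⟨hTll, hTlab⟩ := hleafTl w hh hwl
      obtain ⟨hBl, hBlab⟩ := hemb1.2.1 w hTll
      refine ⟨hleaf_transfer _ hBl, ?_⟩
      rw [hlabel_eq _ hBl.1, hBlab, hTlab]
    · rw [hfun_2 w hh]
      obtain ⟨hTrl, hTrlab⟩ := hleafTr w hh hwl
      obtain ⟨hBl, hBlab⟩ := hemb2.2.1 w hTrl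
      refine ⟨hleaf_transfer _ hBl, ?_⟩
      rw [hlabel_eq _ hBl.1, hBlab, hTrlab]
  · -- walks
    intro w c hadj
    by_cases hwr : w = r
    · subst hwr
      have hcx : c = x := hchr c hadj
      subst hcx
      rw [hE_r, hfun_r, hfun_x]
      refine DG.isWalk_singleton (e := (rB, bu, 0)) ?_
      show 0 < B.mult rB bu
      rw [hm_rubu]
      omega
    · by_cases hwx : w = x
      · subst hwx
        rcases hchx c hadj with rfl | rfl
        · rw [hE_xy, hfun_x, hfun_1 c Relation.ReflTransGen.refl]
          refine DG.isWalk_cons (e := (bu, bv, 0)) ?_ hQy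
          show 0 < B.mult bu bv
          rw [hm_buv]
          omega
        · rw [hE_xy', hfun_x, hfun_2 c Relation.ReflTransGen.refl]
          refine DG.isWalk_cons (e := (bu, bv, 1)) ?_ hQy'
          show 1 < B.mult bu bv
          rw [hm_buv]
          omega
      · rcases hT9 w (hsupT w c hadj).1 with rfl | rfl | hh | hh
        · exact absurd rfl hwr
        · exact absurd rfl hwx
        · rw [hE_1 w c hh, hfun_1 w hh, hfun_1 c (hh.tail hadj)]
          exact htrans _ _ _ (hemb1.2.2.1 w c (hadjTl w c hh hadj)) (hne_rB1 w hh)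
        · rw [hE_2 w c hh, hfun_2 w hh, hfun_2 c (hh.tail hadj)]
          exact htrans _ _ _ (hemb2.2.2.1 w c (hadjTr w c hh hadj)) (hne_rB2 w hh)
  · -- branching
    intro x0 c c' hadj1 hadj2 hcc'
    by_cases hx0r : x0 = r
    · subst hx0r
      exact absurd ((hchr c hadj1).trans (hchr c' hadj2).symm) hcc'
    · by_cases hx0x : x0 = x
      · subst hx0x
        rcases hchx c hadj1 with rfl | rfl <;> rcases hchx c' hadj2 with rfl | rfl
        · exact absurd rfl hcc'
        · rw [hE_xy, hE_xy']
          intro hcon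
          simp at hcon
        · rw [hE_xy, hE_xy']
          intro hcon
          simp at hcon
        · exact absurd rfl hcc'
      · rcases hT9 x0 (hsupT x0 c hadj1).1 with rfl | rfl | hh | hh
        · exact absurd rfl hx0r
        · exact absurd rfl hx0x
        · rw [hE_1 x0 c hh, hE_1 x0 c' hh]
          exact hemb1.2.2.2 x0 c c' (hadjTl x0 c hh hadj1) (hadjTl x0 c' hh hadj2) hcc'
        · rw [hE_2 x0 c hh, hE_2 x0 c' hh]
          exact hemb2.2.2.2 x0 c c' (hadjTr x0 c hh hadj1) (hadjTr x0 c' hh hadj2) hcc'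
end

section
/- Let 𝒯 be a set of MUL-trees with label sets contained in a finite species set X whose split partition is trivial (consists of the single set X), and suppose |X| > 1 or some tree in 𝒯 has more than one leaf. Then every beaded tree on X that weakly displays every MUL-tree in 𝒯 has a bead at the root. -/
/-!
Common formal framework for MUL-trees, phylogenetic networks, beaded trees,
duplication trees, weak embeddings and related operations, following
van Iersel, Janssen, Jones, Murakami, Zeh,
"Polynomial-Time Algorithms for Phylogenetic Inference Problems involving
duplication and reticulation".

All graphs are directed multigraphs on natural-number vertices, given by a
finite vertex set, an edge-multiplicity function and a (partial) leaf
labelling by species (also natural numbers).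
-/

open scoped Classical

namespace DG

/-! ### Auxiliary lemmas -/

lemma sum_pos_exists {s : Finset ℕ} {f : ℕ → ℕ} (h : 0 < ∑ v ∈ s, f v) :
    ∃ v ∈ s, 0 < f v := by
  by_contra hc
  push_neg at hc
  simp only [Nat.le_zero] at hc
  rw [Finset.sum_eq_zero hc] at h
  exact h.false

lemma le_out (G : DG) {u v : ℕ} (hv : v ∈ G.verts) : G.mult u v ≤ G.outDeg u :=
  Finset.single_le_sum (fun _ _ => Nat.zero_le _) hv

lemma le_in (G : DG) {u v : ℕ} (hu : u ∈ G.verts) : G.mult u v ≤ G.inDeg v :=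
  Finset.single_le_sum (f := fun w => G.mult w v) (fun _ _ => Nat.zero_le _) hu

lemma pair_le_out (G : DG) {u v w : ℕ} (hv : v ∈ G.verts) (hw : w ∈ G.verts)
    (hne : v ≠ w) : G.mult u v + G.mult u w ≤ G.outDeg u := by
  have hsub : ({v, w} : Finset ℕ) ⊆ G.verts := by
    intro x hx
    rcases Finset.mem_insert.1 hx with rfl | hx
    · exact hv
    · rw [Finset.mem_singleton] at hx; exact hx ▸ hw
  calc G.mult u v + G.mult u w = ∑ x ∈ ({v, w} : Finset ℕ), G.mult u x :=
        (Finset.sum_pair hne).symm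
    _ ≤ _ := Finset.sum_le_sum_of_subset hsub

lemma pair_le_in (G : DG) {u v w : ℕ} (hu : u ∈ G.verts) (hw : w ∈ G.verts)
    (hne : u ≠ w) : G.mult u v + G.mult w v ≤ G.inDeg v := by
  have hsub : ({u, w} : Finset ℕ) ⊆ G.verts := by
    intro x hx
    rcases Finset.mem_insert.1 hx with rfl | hx
    · exact hu
    · rw [Finset.mem_singleton] at hx; exact hx ▸ hw
  calc G.mult u v + G.mult w v = ∑ x ∈ ({u, w} : Finset ℕ), G.mult x v :=
        (Finset.sum_pair (f := fun x => G.mult x v) hne).symm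
    _ ≤ _ := Finset.sum_le_sum_of_subset hsub

lemma triple_le_out (G : DG) {u v1 v2 v3 : ℕ} (h1 : v1 ∈ G.verts) (h2 : v2 ∈ G.verts)
    (h3 : v3 ∈ G.verts) (h12 : v1 ≠ v2) (h13 : v1 ≠ v3) (h23 : v2 ≠ v3) :
    G.mult u v1 + G.mult u v2 + G.mult u v3 ≤ G.outDeg u := by
  have hsub : ({v1, v2, v3} : Finset ℕ) ⊆ G.verts := by
    intro x hx
    rcases Finset.mem_insert.1 hx with rfl | hx
    · exact h1
    rcases Finset.mem_insert.1 hx with rfl | hx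
    · exact h2
    · rw [Finset.mem_singleton] at hx; exact hx ▸ h3
  have h1n : v1 ∉ ({v2, v3} : Finset ℕ) := by
    simp only [Finset.mem_insert, Finset.mem_singleton]
    push_neg; exact ⟨h12, h13⟩
  calc G.mult u v1 + G.mult u v2 + G.mult u v3
      = ∑ x ∈ ({v1, v2, v3} : Finset ℕ), G.mult u x := by
        rw [Finset.sum_insert h1n, Finset.sum_pair h23, add_assoc]
    _ ≤ _ := Finset.sum_le_sum_of_subset hsub

/-- If a node has out-degree 1, it has a unique out-neighbour. -/
lemma unique_child (G : DG) (hsup : G.Supported) {u w w' : ℕ} (h1 : G.outDeg u = 1)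
    (hw : G.Adj u w) (hw' : G.Adj u w') : w = w' := by
  by_contra hne
  have := G.pair_le_out (u := u) (hsup u w hw).2 (hsup u w' hw').2 hne
  have hw0 : 0 < G.mult u w := hw
  have hw0' : 0 < G.mult u w' := hw'
  omega

/-- If a node has out-degree 2 and two distinct out-neighbours, they are the
only out-neighbours. -/
lemma child_two (G : DG) (hsup : G.Supported) {u c1 c2 w : ℕ} (h2 : G.outDeg u = 2)
    (h1 : G.Adj u c1) (h1' : G.Adj u c2) (hne : c1 ≠ c2) (hw : G.Adj u w) :
    w = c1 ∨ w = c2 := by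
  by_contra hc
  push_neg at hc
  have := G.triple_le_out (u := u) (hsup u c1 h1).2 (hsup u c2 h1').2 (hsup u w hw).2
    hne (Ne.symm hc.1) (Ne.symm hc.2)
  have p1 : 0 < G.mult u c1 := h1
  have p2 : 0 < G.mult u c2 := h1'
  have p3 : 0 < G.mult u w := hw
  omega

/-- A node of out-degree 2 with all multiplicities at most 1 has two distinct
children. -/
lemma exists_two_children (G : DG) {u : ℕ} (h2 : G.outDeg u = 2)
    (hle : ∀ v, G.mult u v ≤ 1) :
    ∃ c1 c2, G.Adj u c1 ∧ G.Adj u c2 ∧ c1 ≠ c2 := by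
  have hsum : ∑ v ∈ G.verts, G.mult u v = 2 := h2
  obtain ⟨c1, hc1V, hc1⟩ := sum_pos_exists (s := G.verts) (f := G.mult u) (by omega)
  have heq := Finset.add_sum_erase G.verts (G.mult u) hc1V
  have hrest : 0 < ∑ v ∈ G.verts.erase c1, G.mult u v := by
    have := hle c1; omega
  obtain ⟨c2, hc2V, hc2⟩ := sum_pos_exists hrest
  exact ⟨c1, c2, hc1, hc2, fun h => (Finset.ne_of_mem_erase hc2V) h.symm⟩

/-- A walk induces strict reachability. -/
lemma sreaches_of_isWalk (G : DG) : ∀ (p : List Arc) (a b : ℕ),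
    G.IsWalk p a b → G.SReaches a b := by
  intro p
  induction p with
  | nil => intro a b h; exact absurd rfl h.1
  | cons e t ih =>
    intro a b h
    obtain ⟨-, hok, hch, hhd, hlast⟩ := h
    have hea : e.1 = a := by
      simp only [List.head?_cons, Option.map_some] at hhd
      exact Option.some.inj hhd
    have hadj : G.Adj a e.2.1 := by
      have := hok e List.mem_cons_self
      unfold ArcOK at this
      rw [hea] at this
      exact Nat.lt_of_le_of_lt (Nat.zero_le _) this
    cases t with
    | nil =>
      have : e.2.1 = b := by
        simp only [List.getLast?_singleton, Option.map_some] at hlast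
        exact Option.some.inj hlast
      exact this ▸ Relation.TransGen.single hadj
    | cons f t' =>
      have hch' := List.isChain_cons_cons.1 hch
      have hwalk : G.IsWalk (f :: t') f.1 b := by
        refine ⟨List.cons_ne_nil _ _, fun x hx => hok x (List.mem_cons_of_mem _ hx),
          hch'.2, by simp, ?_⟩
        rw [← hlast, List.getLast?_cons_cons]
      have := ih f.1 b hwalk
      rw [← hch'.1] at this
      exact Relation.TransGen.head hadj this

lemma reaches_of_isWalk (G : DG) {p : List Arc} {a b : ℕ}
    (h : G.IsWalk p a b) : G.Reaches a b :=
  (G.sreaches_of_isWalk p a b h).to_reflTransGen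

/-- The head arc of a walk. -/
lemma head_arc (G : DG) {p : List Arc} {a b : ℕ} (h : G.IsWalk p a b) :
    ∃ e, p.head? = some e ∧ e.1 = a ∧ G.ArcOK e := by
  obtain ⟨hne, hok, -, hhd, -⟩ := h
  obtain ⟨e, t, rfl⟩ := List.exists_cons_of_ne_nil hne
  refine ⟨e, rfl, ?_, hok e List.mem_cons_self⟩
  simp only [List.head?_cons, Option.map_some] at hhd
  exact Option.some.inj hhd

/-- Two walks out of `a` with different head arcs force out-degree at least 2. -/
lemma two_le_outDeg_of_two_walks (G : DG) (hsup : G.Supported) {p p' : List Arc}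
    {a b b' : ℕ} (h : G.IsWalk p a b) (h' : G.IsWalk p' a b')
    (hne : p.head? ≠ p'.head?) : 2 ≤ G.outDeg a := by
  obtain ⟨e, he, hea, heok⟩ := G.head_arc h
  obtain ⟨f, hf, hfa, hfok⟩ := G.head_arc h'
  have hef : e ≠ f := by
    intro hcontra
    rw [he, hf, hcontra] at hne
    exact hne rfl
  unfold ArcOK at heok hfok
  by_cases htgt : e.2.1 = f.2.1
  · -- same target: different copy indices, so multiplicity ≥ 2
    have hidx : e.2.2 ≠ f.2.2 := by
      intro hidx
      apply hef
      obtain ⟨e1, e2, e3⟩ := e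
      obtain ⟨f1, f2, f3⟩ := f
      simp only at hea hfa htgt hidx
      simp [hea, hfa, htgt, hidx]
    rw [hea, htgt] at heok
    rw [hfa] at hfok
    have hadj : G.Adj a f.2.1 := Nat.lt_of_le_of_lt (Nat.zero_le _) hfok
    have hle' := G.le_out (u := a) (hsup a f.2.1 hadj).2
    omega
  · rw [hea] at heok
    rw [hfa] at hfok
    have hadj1 : G.Adj a e.2.1 := Nat.lt_of_le_of_lt (Nat.zero_le _) heok
    have hadj2 : G.Adj a f.2.1 := Nat.lt_of_le_of_lt (Nat.zero_le _) hfok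
    have := G.pair_le_out (u := a) (hsup a e.2.1 hadj1).2 (hsup a f.2.1 hadj2).2 htgt
    have p1 : 0 < G.mult a e.2.1 := hadj1
    have p2 : 0 < G.mult a f.2.1 := hadj2
    omega

lemma reaches_of_ne (G : DG) {u v : ℕ} (h : G.Reaches u v) (hne : u ≠ v) :
    ∃ w, G.Adj u w ∧ G.Reaches w v := by
  rcases (Relation.reflTransGen_iff_eq_or_transGen.1 h) with rfl | htg
  · exact absurd rfl hne
  · obtain ⟨w, hw, hwr⟩ := Relation.TransGen.head'_iff.1 htg
    exact ⟨w, hw, hwr⟩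

lemma outDeg_zero_reaches (G : DG) (hsup : G.Supported) {v w : ℕ}
    (h : G.Reaches v w) (h0 : G.outDeg v = 0) : v = w := by
  by_contra hne
  obtain ⟨u, hu, -⟩ := G.reaches_of_ne h hne
  have := G.le_out (u := v) (hsup v u hu).2
  have : 0 < G.mult v u := hu
  omega

/-- Everything is reachable from the top if every non-top vertex has a parent. -/
lemma reaches_top (G : DG) (hac : G.Acyclic) {rt : ℕ}
    (hpar : ∀ v ∈ G.verts, v ≠ rt → ∃ u ∈ G.verts, G.Adj u v) :
    ∀ v ∈ G.verts, G.Reaches rt v := by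
  have key : ∀ n, ∀ v ∈ G.verts,
      (G.verts.filter (fun u => G.SReaches u v)).card ≤ n → G.Reaches rt v := by
    intro n
    induction n with
    | zero =>
      intro v hv hcard
      by_cases hvr : v = rt
      · exact hvr ▸ Relation.ReflTransGen.refl
      · obtain ⟨u, huV, hadj⟩ := hpar v hv hvr
        have hm : u ∈ G.verts.filter (fun u => G.SReaches u v) :=
          Finset.mem_filter.2 ⟨huV, Relation.TransGen.single hadj⟩
        have := Finset.card_pos.2 ⟨u, hm⟩
        omega
    | succ n ih =>
      intro v hv hcard
      by_cases hvr : v = rt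
      · exact hvr ▸ Relation.ReflTransGen.refl
      · obtain ⟨u, huV, hadj⟩ := hpar v hv hvr
        have hsub : G.verts.filter (fun w => G.SReaches w u) ⊆
            G.verts.filter (fun w => G.SReaches w v) := by
          intro w hw
          have hw' := Finset.mem_filter.1 hw
          exact Finset.mem_filter.2 ⟨hw'.1, hw'.2.tail hadj⟩
        have hmemv : u ∈ G.verts.filter (fun w => G.SReaches w v) :=
          Finset.mem_filter.2 ⟨huV, Relation.TransGen.single hadj⟩
        have hmemu : u ∉ G.verts.filter (fun w => G.SReaches w u) := by
          intro h
          exact hac u (Finset.mem_filter.1 h).2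
        have hlt : (G.verts.filter (fun w => G.SReaches w u)).card <
            (G.verts.filter (fun w => G.SReaches w v)).card := by
          apply Finset.card_lt_card
          rw [Finset.ssubset_def]
          exact ⟨hsub, fun hall => hmemu (hall hmemv)⟩
        exact (ih u huV (by omega)).tail hadj
  intro v hv
  exact key _ v hv le_rfl

/-- Below every vertex there is a sink. -/
lemma exists_sink_below (G : DG) (hac : G.Acyclic) (hsup : G.Supported) :
    ∀ v ∈ G.verts, ∃ l ∈ G.verts, G.Reaches v l ∧ G.outDeg l = 0 := by
  have key : ∀ n, ∀ v ∈ G.verts,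
      (G.verts.filter (fun u => G.SReaches v u)).card ≤ n →
      ∃ l ∈ G.verts, G.Reaches v l ∧ G.outDeg l = 0 := by
    intro n
    induction n with
    | zero =>
      intro v hv hcard
      by_cases h0 : G.outDeg v = 0
      · exact ⟨v, hv, Relation.ReflTransGen.refl, h0⟩
      · obtain ⟨w, hwV, hadj⟩ := sum_pos_exists (f := G.mult v)
          (s := G.verts) (by unfold outDeg at h0; omega)
        have hm : w ∈ G.verts.filter (fun u => G.SReaches v u) :=
          Finset.mem_filter.2 ⟨hwV, Relation.TransGen.single hadj⟩
        have := Finset.card_pos.2 ⟨w, hm⟩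
        omega
    | succ n ih =>
      intro v hv hcard
      by_cases h0 : G.outDeg v = 0
      · exact ⟨v, hv, Relation.ReflTransGen.refl, h0⟩
      · obtain ⟨w, hwV, hadj⟩ := sum_pos_exists (f := G.mult v)
          (s := G.verts) (by unfold outDeg at h0; omega)
        have hadj' : G.Adj v w := hadj
        have hsub : G.verts.filter (fun u => G.SReaches w u) ⊆
            G.verts.filter (fun u => G.SReaches v u) := by
          intro z hz
          have hz' := Finset.mem_filter.1 hz
          exact Finset.mem_filter.2 ⟨hz'.1, Relation.TransGen.head hadj' hz'.2⟩
        have hmemv : w ∈ G.verts.filter (fun u => G.SReaches v u) :=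
          Finset.mem_filter.2 ⟨hwV, Relation.TransGen.single hadj'⟩
        have hmemu : w ∉ G.verts.filter (fun u => G.SReaches w u) := by
          intro h
          exact hac w (Finset.mem_filter.1 h).2
        have hlt : (G.verts.filter (fun u => G.SReaches w u)).card <
            (G.verts.filter (fun u => G.SReaches v u)).card := by
          apply Finset.card_lt_card
          rw [Finset.ssubset_def]
          exact ⟨hsub, fun hall => hmemu (hall hmemv)⟩
        obtain ⟨l, hlV, hreach, hl0⟩ := ih w hwV (by omega)
        exact ⟨l, hlV, Relation.ReflTransGen.head hadj' hreach, hl0⟩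
  intro v hv
  exact key _ v hv le_rfl

end DG

/-- if the split partition of `𝒯` is trivial and `|X| > 1` or
some tree of `𝒯` has more than one leaf, then every beaded tree on `X` weakly
displaying every MUL-tree in `𝒯` has a bead at the root. -/
theorem trivial_split_partition_bead_at_root (X : Finset ℕ) (Ts : Set DG)
    (hT : ∀ T ∈ Ts, DG.IsMulTree X T)
    (htriv : ∀ S : Finset ℕ, DG.SplitPart X Ts S → S = X)
    (hbig : 1 < X.card ∨ ∃ T ∈ Ts, 1 < DG.numLeaves T)
    (B : DG) (hB : DG.Solution X Ts B) :
    B.HasBeadAtRoot := by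
  classical
  obtain ⟨⟨hN, hbead⟩, hdisp⟩ := hB
  obtain ⟨r, hr, hruniq⟩ := hN.root
  have hrV : r ∈ B.verts := hr.1
  have hrin : B.inDeg r = 0 := hr.2.1
  have hrout : B.outDeg r = 1 := hr.2.2
  -- the child `c` of the root
  obtain ⟨c, hcV, hrc⟩ : ∃ c ∈ B.verts, B.Adj r c := by
    have hpos : 0 < ∑ v ∈ B.verts, B.mult r v := by
      have h' : B.outDeg r = 1 := hrout
      unfold DG.outDeg at h'
      omega
    exact DG.sum_pos_exists hpos
  have noAdjRoot : ∀ w, ¬ B.Adj w r := by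
    intro w hw
    have h1 := B.le_in (v := r) (hN.supported w r hw).1
    have h2 : 0 < B.mult w r := hw
    omega
  have reachRootEq : ∀ v, B.Reaches v r → v = r := by
    intro v hv
    rcases Relation.ReflTransGen.cases_tail hv with h | ⟨w, -, hadj⟩
    · exact h.symm
    · exact absurd hadj (noAdjRoot w)
  have hparB : ∀ v ∈ B.verts, v ≠ r → ∃ u ∈ B.verts, B.Adj u v := by
    intro v hv hvr
    have hin : 0 < B.inDeg v := by
      rcases hN.nodes v hv with h | h | h | h
      · exact absurd (hruniq v h) hvr
      · rw [h.2.1]; omega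
      · rw [h.2.1]; omega
      · rw [h.2.1]; omega
    have hin' : 0 < ∑ u ∈ B.verts, B.mult u v := by
      unfold DG.inDeg at hin; exact hin
    exact DG.sum_pos_exists hin'
  have hreachB : ∀ v ∈ B.verts, B.Reaches r v := B.reaches_top hN.acyclic hparB
  by_cases hbc : ∃ v, B.mult c v = 2
  · obtain ⟨v, hv⟩ := hbc
    exact ⟨r, c, v, hr, hrc, hv⟩
  rcases hN.nodes c hcV with hcr | hctree | hcretic | hcleaf
  · -- c is the root: cycle
    exfalso
    have hce := hruniq c hcr
    rw [hce] at hrc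
    exact hN.acyclic r (Relation.TransGen.single hrc)
  · -- c is a tree node: main case
    exfalso
    have houtc : B.outDeg c = 2 := hctree.2.2
    have hmultle : ∀ v, B.mult c v ≤ 1 := by
      intro v
      by_cases hv : 0 < B.mult c v
      · have hvV := (hN.supported c v hv).2
        have h1 := B.le_out (u := c) hvV
        have hne2 : B.mult c v ≠ 2 := fun h => hbc ⟨v, h⟩
        omega
      · omega
    obtain ⟨c1, c2, hc1, hc2, h12⟩ := B.exists_two_children houtc hmultle
    have hc1V := (hN.supported c c1 hc1).2
    have hc2V := (hN.supported c c2 hc2).2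
    -- every vertex of B has at most one in-neighbour
    have uniqPar : ∀ v u u', B.Adj u v → B.Adj u' v → u = u' := by
      intro v u u' hu hu'
      have huV := (hN.supported u v hu).1
      have hu'V := (hN.supported u' v hu').1
      have hvV := (hN.supported u v hu).2
      have hupos : 0 < B.mult u v := hu
      have hu'pos : 0 < B.mult u' v := hu'
      have hinpos : 0 < B.inDeg v := lt_of_lt_of_le hupos (B.le_in huV)
      rcases hN.nodes v hvV with h | h | h | h
      · rw [h.2.1] at hinpos; omega
      · by_contra hne
        have h2 := B.pair_le_in (v := v) huV hu'V hne
        rw [h.2.1] at h2; omega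
      · obtain ⟨w, hw⟩ := hbead v hvV h.2.1
        have hwadj : B.Adj w v := by show 0 < B.mult w v; omega
        have hwV : w ∈ B.verts := (hN.supported w v hwadj).1
        have heq1 : u = w := by
          by_contra hne
          have h2 := B.pair_le_in (v := v) huV hwV hne
          rw [hw, h.2.1] at h2; omega
        have heq2 : u' = w := by
          by_contra hne
          have h2 := B.pair_le_in (v := v) hu'V hwV hne
          rw [hw, h.2.1] at h2; omega
        rw [heq1, heq2]
      · by_contra hne
        have h2 := B.pair_le_in (v := v) huV hu'V hne
        rw [h.2.1] at h2; omega
    -- ancestors of a common vertex are comparable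
    have chain : ∀ b v, B.Reaches b v → ∀ a, B.Reaches a v →
        B.Reaches a b ∨ B.Reaches b a := by
      intro b v hbv
      induction hbv using Relation.ReflTransGen.head_induction_on with
      | refl => intro a hav; exact Or.inl hav
      | @head b' c' hadj hrest ih =>
        intro a hav
        rcases ih a hav with h | h
        · rcases Relation.ReflTransGen.cases_tail h with heq | ⟨p, hap, hpb'⟩
          · exact Or.inr (heq ▸ Relation.ReflTransGen.single hadj)
          · have hpb : p = b' := uniqPar c' p b' hpb' hadj
            rw [hpb] at hap
            exact Or.inl hap
        · exact Or.inr (Relation.ReflTransGen.head hadj h)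
    -- the two sides are disjoint
    have hdisj : ∀ v, B.Reaches c1 v → B.Reaches c2 v → False := by
      intro v h1 h2
      have key : ∀ d1 d2, B.Adj c d1 → B.Adj c d2 → d1 ≠ d2 → ¬ B.Reaches d1 d2 := by
        intro d1 d2 ha1 ha2 hne hr12
        rcases Relation.ReflTransGen.cases_tail hr12 with heq | ⟨p, hp, hpd⟩
        · exact hne heq.symm
        · have hpc : p = c := uniqPar d2 p c hpd ha2
          rw [hpc] at hp
          exact hN.acyclic c (Relation.TransGen.head' ha1 hp)
      rcases chain c2 v h2 c1 h1 with h | h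
      · exact key c1 c2 hc1 hc2 h12 h
      · exact key c2 c1 hc2 hc1 (Ne.symm h12) h
    -- every vertex other than r, c lies on one of the two sides
    have hside : ∀ v ∈ B.verts, v ≠ r → v ≠ c →
        B.Reaches c1 v ∨ B.Reaches c2 v := by
      intro v hvV hvr hvc
      obtain ⟨w, hw, hwv⟩ := B.reaches_of_ne (hreachB v hvV) (Ne.symm hvr)
      have hwc : w = c := B.unique_child hN.supported hrout hw hrc
      subst hwc
      obtain ⟨w', hw', hwv'⟩ := B.reaches_of_ne hwv (Ne.symm hvc)
      rcases B.child_two hN.supported houtc hc1 hc2 h12 hw' with h | h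
      · rw [h] at hwv'; exact Or.inl hwv'
      · rw [h] at hwv'; exact Or.inr hwv'
    -- a label cannot be on both sides
    have notboth : ∀ a ∈ X, (∃ v, B.label v = some a ∧ B.Reaches c1 v) →
        (∃ v, B.label v = some a ∧ B.Reaches c2 v) → False := by
      rintro a haX ⟨v, hv, h1⟩ ⟨v', hv', h2⟩
      obtain ⟨w, -, huniq⟩ := hN.labelsOnto a haX
      have e1 : v = w := huniq v hv
      have e2 : v' = w := huniq v' hv'
      rw [e1, ← e2] at h1
      exact hdisj v' h1 h2
    have leafnode : ∀ l ∈ B.verts, B.outDeg l = 0 → B.IsLeafNode l := by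
      intro l hlV h0
      rcases hN.nodes l hlV with h | h | h | h
      · rw [h.2.2] at h0; omega
      · rw [h.2.2] at h0; omega
      · rw [h.2.2] at h0; omega
      · exact h
    -- a label on each side
    obtain ⟨l1, hl1V, hl1r, hl1out⟩ := B.exists_sink_below hN.acyclic hN.supported c1 hc1V
    obtain ⟨x1, hx1lab⟩ := (hN.labels l1).2 (leafnode l1 hl1V hl1out)
    have hx1X : x1 ∈ X := hN.labelsSub l1 x1 hx1lab
    have hQ1x1 : ∃ v, B.label v = some x1 ∧ B.Reaches c1 v := ⟨l1, hx1lab, hl1r⟩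
    obtain ⟨l2, hl2V, hl2r, hl2out⟩ := B.exists_sink_below hN.acyclic hN.supported c2 hc2V
    obtain ⟨x2, hx2lab⟩ := (hN.labels l2).2 (leafnode l2 hl2V hl2out)
    have hx2X : x2 ∈ X := hN.labelsSub l2 x2 hx2lab
    have hQ2x2 : ∃ v, B.label v = some x2 ∧ B.Reaches c2 v := ⟨l2, hx2lab, hl2r⟩
    -- every member of the depth-1 forest sits on one side
    have sided : ∀ T' ∈ DG.F1Set Ts,
        (∀ a v, T'.label v = some a →
          a ∈ X ∧ ∃ w, B.label w = some a ∧ B.Reaches c1 w) ∨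
        (∀ a v, T'.label v = some a →
          a ∈ X ∧ ∃ w, B.label w = some a ∧ B.Reaches c2 w) := by
      intro T' hT'mem
      obtain ⟨T, hTmem, r', x, y, y', hr'root, hr'x, hxy, hxy', hyne, hT'eq⟩ := hT'mem
      subst hT'eq
      have hMT := hT T hTmem
      obtain ⟨rr, hrr, hrruniq⟩ := hMT.root
      have huniq' : ∀ v, T.IsRoot v → v = r' := by
        intro v hv
        rw [hrruniq v hv, hrruniq r' hr'root]
      have hparT : ∀ v ∈ T.verts, v ≠ r' → ∃ u ∈ T.verts, T.Adj u v := by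
        intro v hv hvr
        have hin : 0 < T.inDeg v := by
          rcases hMT.nodes v hv with h | h | h
          · exact absurd (huniq' v h) hvr
          · rw [h.2.1]; omega
          · rw [h.2.1]; omega
        have hin' : 0 < ∑ u ∈ T.verts, T.mult u v := by
          unfold DG.inDeg at hin; exact hin
        exact DG.sum_pos_exists hin'
      have hreachT := T.reaches_top hMT.acyclic hparT
      have hxV : x ∈ T.verts := (hMT.supported r' x hr'x).2
      have hyV : y ∈ T.verts := (hMT.supported x y hxy).2
      have hy'V : y' ∈ T.verts := (hMT.supported x y' hxy').2
      have hxtree : T.outDeg x = 2 := by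
        rcases hMT.nodes x hxV with h | h | h
        · exfalso
          have hxe := huniq' x h
          rw [hxe] at hr'x
          exact hMT.acyclic r' (Relation.TransGen.single hr'x)
        · exact h.2.2
        · exfalso
          have h1 := T.le_out (u := x) hyV
          have hpos : 0 < T.mult x y := hxy
          rw [h.2.2] at h1; omega
      obtain ⟨hm, hEm, hmapV, hmapL, hmapW, hmapD⟩ := hdisp T hTmem
      have hw1 := hmapW x y hxy
      have hw2 := hmapW x y' hxy'
      have h2o := B.two_le_outDeg_of_two_walks hN.supported hw1 hw2
        (hmapD x y y' hxy hxy' hyne)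
      have hxr : hm x ≠ r := by
        intro h
        rw [h, hrout] at h2o
        omega
      have hs : B.SReaches (hm x) (hm y) := B.sreaches_of_isWalk _ _ _ hw1
      have hyVB : hm y ∈ B.verts := hmapV y hyV
      have hmyr : hm y ≠ r := by
        intro h
        rw [h] at hs
        obtain ⟨w, -, hwr⟩ := Relation.TransGen.tail'_iff.1 hs
        exact noAdjRoot w hwr
      have hmyc : hm y ≠ c := by
        intro h
        rw [h] at hs
        obtain ⟨w, hw, hwc⟩ := Relation.TransGen.tail'_iff.1 hs
        have hwr : w = r := uniqPar c w r hwc hrc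
        rw [hwr] at hw
        exact hxr (reachRootEq _ hw)
      have mapsReach : ∀ u v, T.Reaches u v → B.Reaches (hm u) (hm v) := by
        intro u v huv
        induction huv with
        | refl => exact Relation.ReflTransGen.refl
        | tail _ hstep ih => exact ih.trans (B.reaches_of_isWalk (hmapW _ _ hstep))
      have key : ∀ a v, (DG.f1del T r' x y y').label v = some a →
          a ∈ X ∧ B.label (hm v) = some a ∧ B.Reaches (hm y) (hm v) := by
        intro a v hlab
        have hlab' : (if v = x ∨ T.Reaches y' v then none else T.label v) = some a := hlab
        by_cases hc' : v = x ∨ T.Reaches y' v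
        · rw [if_pos hc'] at hlab'
          exact absurd hlab' (by simp)
        · rw [if_neg hc'] at hlab'
          push_neg at hc'
          have haX : a ∈ X := hMT.labelsSub v a hlab'
          have hvleaf : T.IsLeafNode v := (hMT.labels v).1 ⟨a, hlab'⟩
          have hvV := hvleaf.1
          have hvr : v ≠ r' := by
            intro h
            rw [h] at hvleaf
            have h0 := hvleaf.2.2
            have h1 := hr'root.2.2
            omega
          obtain ⟨w, hw, hwv⟩ := T.reaches_of_ne (hreachT v hvV) (Ne.symm hvr)
          have hwx : w = x := T.unique_child hMT.supported hr'root.2.2 hw hr'x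
          subst hwx
          obtain ⟨w', hw', hwv'⟩ := T.reaches_of_ne hwv (Ne.symm hc'.1)
          have hyreach : T.Reaches y v := by
            rcases T.child_two hMT.supported hxtree hxy hxy' hyne hw' with h | h
            · rw [h] at hwv'; exact hwv'
            · rw [h] at hwv'; exact absurd hwv' hc'.2
          exact ⟨haX, (hmapL v hvleaf).2.trans hlab', mapsReach y v hyreach⟩
      rcases hside (hm y) hyVB hmyr hmyc with h | h
      · left
        intro a v hlab
        obtain ⟨haX, hblab, hreach⟩ := key a v hlab
        exact ⟨haX, hm v, hblab, h.trans hreach⟩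
      · right
        intro a v hlab
        obtain ⟨haX, hblab, hreach⟩ := key a v hlab
        exact ⟨haX, hm v, hblab, h.trans hreach⟩
    -- the split relation preserves sides
    have splitPres : ∀ a b, DG.SplitRel Ts a b →
        ((∃ v, B.label v = some a ∧ B.Reaches c1 v) ↔
         (∃ v, B.label v = some b ∧ B.Reaches c1 v)) := by
      rintro a b ⟨T', hT'mem, ⟨u, hu⟩, ⟨v, hv⟩⟩
      rcases sided T' hT'mem with h | h
      · exact iff_of_true (h a u hu).2 (h b v hv).2
      · obtain ⟨haX, hQ'a⟩ := h a u hu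
        obtain ⟨hbX, hQ'b⟩ := h b v hv
        exact iff_of_false (fun hQ => notboth a haX hQ hQ'a)
          (fun hQ => notboth b hbX hQ hQ'b)
    have eqvPres : ∀ a b, Relation.EqvGen (DG.SplitRel Ts) a b →
        ((∃ v, B.label v = some a ∧ B.Reaches c1 v) ↔
         (∃ v, B.label v = some b ∧ B.Reaches c1 v)) := by
      intro a b h
      induction h with
      | rel _ _ hr => exact splitPres _ _ hr
      | refl _ => exact Iff.rfl
      | symm _ _ _ ih => exact ih.symm
      | trans _ _ _ _ _ ih1 ih2 => exact ih1.trans ih2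
    -- conclude
    have hSpart : DG.SplitPart X Ts
        (X.filter (fun b => Relation.EqvGen (DG.SplitRel Ts) x1 b)) := ⟨x1, hx1X, rfl⟩
    have hSX := htriv _ hSpart
    have hx2mem : x2 ∈ X.filter (fun b => Relation.EqvGen (DG.SplitRel Ts) x1 b) := by
      rw [hSX]; exact hx2X
    have heqv := (Finset.mem_filter.1 hx2mem).2
    have hQ1x2 := (eqvPres x1 x2 heqv).1 hQ1x1
    exact notboth x2 hx2X hQ1x2 hQ2x2
  · -- c is a reticulation: impossible
    exfalso
    obtain ⟨u, hu⟩ := hbead c hcV hcretic.2.1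
    have huadj : B.Adj u c := by show 0 < B.mult u c; omega
    have huV : u ∈ B.verts := (hN.supported u c huadj).1
    by_cases hur : u = r
    · subst hur
      have h1 := B.le_out (u := u) hcV
      rw [hu, hrout] at h1
      omega
    · have h1 := B.pair_le_in (v := c) huV hrV hur
      have h2 : 0 < B.mult r c := hrc
      rw [hu, hcretic.2.1] at h1
      omega
  · -- c is a leaf
    exfalso
    have leafc : ∀ v x, B.label v = some x → v = c := by
      intro v x hvx
      have hleaf : B.IsLeafNode v := (hN.labels v).1 ⟨x, hvx⟩
      have hvV := hleaf.1
      have hvr : v ≠ r := by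
        intro h
        rw [h] at hleaf
        have h0 := hleaf.2.2
        omega
      obtain ⟨w, hw, hwv⟩ := B.reaches_of_ne (hreachB v hvV) (Ne.symm hvr)
      have hwc : w = c := B.unique_child hN.supported hrout hw hrc
      subst hwc
      exact (B.outDeg_zero_reaches hN.supported hwv hcleaf.2.2).symm
    rcases hbig with hX | ⟨T, hTmem, hTleaves⟩
    · obtain ⟨x1, hx1, x2, hx2, hne⟩ := Finset.one_lt_card.1 hX
      obtain ⟨v1, hv1, -⟩ := hN.labelsOnto x1 hx1
      obtain ⟨v2, hv2, -⟩ := hN.labelsOnto x2 hx2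
      have e1 := leafc v1 x1 hv1
      have e2 := leafc v2 x2 hv2
      rw [e1] at hv1
      rw [e2] at hv2
      rw [hv1] at hv2
      exact hne (Option.some.inj hv2)
    · have hMT := hT T hTmem
      obtain ⟨r', hr', hr'uniq⟩ := hMT.root
      have hcard : 1 < (T.verts.filter (fun v => (T.label v).isSome)).card := hTleaves
      obtain ⟨v1, hv1m, v2, hv2m, hvne⟩ := Finset.one_lt_card.1 hcard
      obtain ⟨hv1V, hv1s⟩ := Finset.mem_filter.1 hv1m
      obtain ⟨hv2V, hv2s⟩ := Finset.mem_filter.1 hv2m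
      have hleaf1 : T.IsLeafNode v1 := (hMT.labels v1).1 (Option.isSome_iff_exists.1 hv1s)
      have hleaf2 : T.IsLeafNode v2 := (hMT.labels v2).1 (Option.isSome_iff_exists.1 hv2s)
      have hparT : ∀ v ∈ T.verts, v ≠ r' → ∃ u ∈ T.verts, T.Adj u v := by
        intro v hv hvr
        have hin : 0 < T.inDeg v := by
          rcases hMT.nodes v hv with h | h | h
          · exact absurd (hr'uniq v h) hvr
          · rw [h.2.1]; omega
          · rw [h.2.1]; omega
        have hin' : 0 < ∑ u ∈ T.verts, T.mult u v := by
          unfold DG.inDeg at hin; exact hin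
        exact DG.sum_pos_exists hin'
      have hreachT := T.reaches_top hMT.acyclic hparT
      obtain ⟨x', hx'V, hr'x⟩ : ∃ x ∈ T.verts, T.Adj r' x := by
        have hpos : 0 < ∑ v ∈ T.verts, T.mult r' v := by
          have h' : T.outDeg r' = 1 := hr'.2.2
          unfold DG.outDeg at h'
          omega
        exact DG.sum_pos_exists hpos
      have hv1r : v1 ≠ r' := by
        intro h
        rw [h] at hleaf1
        have h0 := hleaf1.2.2
        have h1 := hr'.2.2
        omega
      have hv2r : v2 ≠ r' := by
        intro h
        rw [h] at hleaf2
        have h0 := hleaf2.2.2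
        have h1 := hr'.2.2
        omega
      have step1 : T.Reaches x' v1 := by
        obtain ⟨w, hw, hwv⟩ := T.reaches_of_ne (hreachT v1 hleaf1.1) (Ne.symm hv1r)
        rwa [T.unique_child hMT.supported hr'.2.2 hw hr'x] at hwv
      have step2 : T.Reaches x' v2 := by
        obtain ⟨w, hw, hwv⟩ := T.reaches_of_ne (hreachT v2 hleaf2.1) (Ne.symm hv2r)
        rwa [T.unique_child hMT.supported hr'.2.2 hw hr'x] at hwv
      rcases hMT.nodes x' hx'V with h | h | h
      · have hxe := hr'uniq x' h
        rw [hxe] at hr'x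
        exact hMT.acyclic r' (Relation.TransGen.single hr'x)
      · obtain ⟨y, y', hxy, hxy', hyne⟩ :=
          T.exists_two_children h.2.2 (fun v => hMT.simple x' v)
        obtain ⟨hm, hEm, hmapV, hmapL, hmapW, hmapD⟩ := hdisp T hTmem
        have hw1 := hmapW x' y hxy
        have hw2 := hmapW x' y' hxy'
        have h2o := B.two_le_outDeg_of_two_walks hN.supported hw1 hw2
          (hmapD x' y y' hxy hxy' hyne)
        have hxV : hm x' ∈ B.verts := hmapV x' hx'V
        have hxr : hm x' ≠ r := by
          intro hh
          rw [hh, hrout] at h2o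
          omega
        obtain ⟨w, hw, hwv⟩ := B.reaches_of_ne (hreachB _ hxV) (Ne.symm hxr)
        have hwc : w = c := B.unique_child hN.supported hrout hw hrc
        subst hwc
        have hce := B.outDeg_zero_reaches hN.supported hwv hcleaf.2.2
        rw [← hce, hcleaf.2.2] at h2o
        omega
      · have e1 := T.outDeg_zero_reaches hMT.supported step1 h.2.2
        have e2 := T.outDeg_zero_reaches hMT.supported step2 h.2.2
        exact hvne (e1.symm.trans e2)
end
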